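/- arXiv:math/0208121 — 4 statements merged into one kernel-verified Lean document; each statement's English description precedes it below -/
import Mathlib

section
/- For every λ > 0, the operator F_λ = P_λ ℱ P_λ is a compact operator on L²(ℝ). -/
open MeasureTheory Complex Set FourierTransform

noncomputable section

/-- `F` is the Fourier–Plancherel transform on `L²(ℝ)`: the unitary operator agreeing with
the Fourier integral `x ↦ ∫ y, exp(2πixy) f y` on integrable square-integrable functions. -/
def IsFourierPlancherel
    (F : Lp ℂ 2 (volume : Measure ℝ) ≃ₗᵢ[ℂ] Lp ℂ 2 (volume : Measure ℝ)) : Prop :=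
  ∀ (f : ℝ → ℂ) (_ : Integrable f volume) (hf : MemLp f 2 volume),
    (F (hf.toLp f) : ℝ → ℂ) =ᵐ[volume] (𝓕⁻ f : ℝ → ℂ)

/-- `P_λ` : multiplication by the indicator function of `(-λ, λ)` on `L²(ℝ)`. -/
def Pproj (lam : ℝ) (f : Lp ℂ 2 (volume : Measure ℝ)) : Lp ℂ 2 (volume : Measure ℝ) :=
  ((Lp.memLp f).indicator (measurableSet_Ioo : MeasurableSet (Ioo (-lam) lam))).toLp _


namespace FlambdaProof

open Filter Topology Finset
open scoped ENNReal NNReal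

local notation "H" => Lp ℂ 2 (volume : Measure ℝ)

/-! ### Tail of the exponential series -/

def expTail (R : ℝ) (n : ℕ) : ℝ := ∑' k, R ^ (k + n) / (k + n).factorial

lemma tendsto_expTail (R : ℝ) : Tendsto (expTail R) atTop (𝓝 0) :=
  tendsto_sum_nat_add fun j => R ^ j / j.factorial

lemma expTail_nonneg {R : ℝ} (hR : 0 ≤ R) (n : ℕ) : 0 ≤ expTail R n :=
  tsum_nonneg fun k => div_nonneg (pow_nonneg hR _) (Nat.cast_nonneg _)

set_option maxHeartbeats 1000000 in
lemma exp_partial_bound {R : ℝ} {z : ℂ} (hz : ‖z‖ ≤ R) (n : ℕ) :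
    ‖Complex.exp z - ∑ k ∈ Finset.range n, z ^ k / (k.factorial : ℂ)‖ ≤ expTail R n := by
  have hs : Summable fun k : ℕ => z ^ k / (k.factorial : ℂ) :=
    NormedSpace.expSeries_div_summable z
  have hexp : Complex.exp z = ∑' k : ℕ, z ^ k / (k.factorial : ℂ) := by
    rw [Complex.exp_eq_exp_ℂ, NormedSpace.exp_eq_tsum_div]
  have hsplit := Summable.sum_add_tsum_nat_add (f := fun k : ℕ => z ^ k / (k.factorial : ℂ)) n hs
  have hdiff : Complex.exp z - ∑ k ∈ Finset.range n, z ^ k / (k.factorial : ℂ)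
      = ∑' k : ℕ, z ^ (k + n) / ((k + n).factorial : ℂ) := by
    rw [hexp, ← hsplit]; ring
  rw [hdiff]
  have hsn : Summable fun k : ℕ => ‖z ^ (k + n) / ((k + n).factorial : ℂ)‖ :=
    (summable_nat_add_iff n).2 (NormedSpace.norm_expSeries_div_summable z)
  have hsR : Summable fun k : ℕ => R ^ (k + n) / ((k + n).factorial : ℝ) :=
    (summable_nat_add_iff n).2 (Real.summable_pow_div_factorial R)
  refine (norm_tsum_le_tsum_norm hsn).trans ?_
  refine hsn.tsum_le_tsum (fun k => ?_) hsR
  rw [norm_div, norm_pow]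
  have h1 : ‖((k + n).factorial : ℂ)‖ = ((k + n).factorial : ℝ) := by simp
  rw [h1]
  gcongr

/-! ### `Pproj` as a continuous linear map -/

variable (lam : ℝ)

lemma coeFn_Pproj (f : H) :
    ⇑(Pproj lam f) =ᵐ[volume] (Ioo (-lam) lam).indicator ⇑f :=
  MemLp.coeFn_toLp _

lemma Pproj_add (f g : H) : Pproj lam (f + g) = Pproj lam f + Pproj lam g := by
  refine Lp.ext ?_
  filter_upwards [coeFn_Pproj lam (f + g), (Lp.coeFn_add f g).indicator (s := Ioo (-lam) lam),
    Lp.coeFn_add (Pproj lam f) (Pproj lam g), coeFn_Pproj lam f, coeFn_Pproj lam g]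
    with x e1 e2 e3 e4 e5
  rw [e1, e2, e3, Pi.add_apply, e4, e5]
  by_cases hx : x ∈ Ioo (-lam) lam <;>
    simp [Set.indicator_of_mem, Set.indicator_of_notMem, hx]

lemma Pproj_smul (c : ℂ) (f : H) : Pproj lam (c • f) = c • Pproj lam f := by
  refine Lp.ext ?_
  filter_upwards [coeFn_Pproj lam (c • f), (Lp.coeFn_smul c f).indicator (s := Ioo (-lam) lam),
    Lp.coeFn_smul c (Pproj lam f), coeFn_Pproj lam f] with x e1 e2 e3 e4
  rw [e1, e2, e3, Pi.smul_apply, e4]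
  by_cases hx : x ∈ Ioo (-lam) lam <;>
    simp [Set.indicator_of_mem, Set.indicator_of_notMem, hx]

lemma norm_Pproj_le (f : H) : ‖Pproj lam f‖ ≤ ‖f‖ := by
  rw [Lp.norm_def, Lp.norm_def]
  refine ENNReal.toReal_mono (Lp.eLpNorm_ne_top f) ?_
  calc eLpNorm (⇑(Pproj lam f)) 2 volume
      = eLpNorm ((Ioo (-lam) lam).indicator ⇑f) 2 volume :=
        eLpNorm_congr_ae (coeFn_Pproj lam f)
    _ ≤ eLpNorm (⇑f) 2 volume := eLpNorm_indicator_le _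

def PprojCLM : H →L[ℂ] H :=
  LinearMap.mkContinuous
    { toFun := Pproj lam
      map_add' := Pproj_add lam
      map_smul' := Pproj_smul lam } 1 (fun f => by simpa using norm_Pproj_le lam f)

@[simp] lemma PprojCLM_apply (f : H) : PprojCLM lam f = Pproj lam f := rfl

/-! ### Rank-one operators are compact -/

lemma isCompactOperator_rankOne (φ : H →L[ℂ] ℂ) (v : H) :
    IsCompactOperator fun f : H => φ f • v := by
  refine ⟨(fun t : ℂ => t • v) '' Metric.closedBall 0 1,
    (isCompact_closedBall 0 1).image (continuous_id.smul continuous_const), ?_⟩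
  have h : φ ⁻¹' Metric.closedBall 0 1 ∈ 𝓝 (0 : H) := by
    refine φ.continuous.continuousAt.preimage_mem_nhds ?_
    rw [φ.map_zero]
    exact Metric.closedBall_mem_nhds (0 : ℂ) one_pos
  exact Filter.mem_of_superset h fun f hf => ⟨φ f, hf, rfl⟩

/-! ### The finite rank approximations -/

instance finIoo : IsFiniteMeasure (volume.restrict (Ioo (-lam) lam)) :=
  ⟨by rw [Measure.restrict_apply_univ]; simp [Real.volume_Ioo]⟩

lemma memℒp_ek (k : ℕ) :
    MemLp ((Ioo (-lam) lam).indicator fun x : ℝ => (x : ℂ) ^ k) 2 volume := by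
  rw [memLp_indicator_iff_restrict measurableSet_Ioo]
  refine MemLp.mono_exponent (q := ⊤) ?_ le_top
  refine memLp_top_of_bound ((Complex.continuous_ofReal.pow k).aestronglyMeasurable)
    (|lam| ^ k) ?_
  filter_upwards [ae_restrict_mem measurableSet_Ioo] with x hx
  rw [norm_pow, Complex.norm_real]
  refine pow_le_pow_left₀ (norm_nonneg _) ?_ k
  rw [Real.norm_eq_abs]
  exact (abs_lt.2 ⟨hx.1, hx.2⟩).le.trans (le_abs_self lam)

def ek (k : ℕ) : H := (memℒp_ek lam k).toLp _

lemma coeFn_ek (k : ℕ) :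
    ⇑(ek lam k) =ᵐ[volume] (Ioo (-lam) lam).indicator fun x : ℝ => (x : ℂ) ^ k :=
  MemLp.coeFn_toLp _

def Tn (n : ℕ) : H →L[ℂ] H :=
  ∑ k ∈ Finset.range n,
    ((2 * ↑Real.pi * Complex.I) ^ k / (k.factorial : ℂ)) •
      ((innerSL ℂ (ek lam k)).smulRight (ek lam k))

lemma isCompactOperator_Tn (n : ℕ) : IsCompactOperator ⇑(Tn lam n) := by
  classical
  refine Finset.sum_induction _ (fun A : H →L[ℂ] H => IsCompactOperator ⇑A)
    (fun A B hA hB => ?_) ?_ (fun k _ => ?_)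
  · show IsCompactOperator ⇑(A + B)
    have h := hA.add hB
    have e : ⇑(A + B) = ⇑A + ⇑B := ContinuousLinearMap.coe_add' A B
    rw [e]; exact h
  · show IsCompactOperator ⇑(0 : H →L[ℂ] H)
    have e : ⇑(0 : H →L[ℂ] H) = fun _ => (0 : H) := rfl
    rw [e]; exact isCompactOperator_zero
  · show IsCompactOperator ⇑(((2 * ↑Real.pi * Complex.I) ^ k / (k.factorial : ℂ)) •
      ((innerSL ℂ (ek lam k)).smulRight (ek lam k)))
    have e : ⇑(((2 * ↑Real.pi * Complex.I) ^ k / (k.factorial : ℂ)) •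
        ((innerSL ℂ (ek lam k)).smulRight (ek lam k)))
        = fun f : H => ((((2 * ↑Real.pi * Complex.I) ^ k / (k.factorial : ℂ)) •
            innerSL ℂ (ek lam k)) f) • ek lam k := by
      ext f
      simp [smul_smul]
    rw [e]
    exact isCompactOperator_rankOne _ _

lemma Tn_apply (n : ℕ) (f : H) :
    Tn lam n f = ∑ k ∈ Finset.range n,
      (((2 * ↑Real.pi * Complex.I) ^ k / (k.factorial : ℂ)) * inner ℂ (ek lam k) f) • ek lam k := by
  simp [Tn, ContinuousLinearMap.sum_apply, smul_smul]

lemma coeFn_lp_sum {ι : Type*} (s : Finset ι) (g : ι → H) :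
    ⇑(∑ i ∈ s, g i) =ᵐ[volume] fun x => ∑ i ∈ s, g i x := by
  classical
  induction s using Finset.induction with
  | empty => simpa [Pi.zero_def] using Lp.coeFn_zero ℂ 2 (volume : Measure ℝ)
  | insert _ _ hnotmem ih =>
      rename_i a s
      rw [Finset.sum_insert hnotmem]
      filter_upwards [Lp.coeFn_add (g a) (∑ i ∈ s, g i), ih] with x h1 h2
      rw [Finset.sum_insert hnotmem]
      simp only [h1, Pi.add_apply, h2]

/-! ### Identification of the operators with explicit integral formulas -/

lemma inner_ek (k : ℕ) (f : H) :
    (inner ℂ (ek lam k) f : ℂ) = ∫ y in Ioo (-lam) lam, (y : ℂ) ^ k * f y := by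
  rw [MeasureTheory.L2.inner_def, ← integral_indicator measurableSet_Ioo]
  refine integral_congr_ae ?_
  filter_upwards [coeFn_ek lam k] with x hx
  rw [hx]
  by_cases hmem : x ∈ Ioo (-lam) lam
  · simp [Set.indicator_of_mem hmem, RCLike.inner_apply, ← Complex.ofReal_pow,
      Complex.conj_ofReal, mul_comm]
  · simp [Set.indicator_of_notMem hmem]

lemma coeFn_Tn (n : ℕ) (f : H)
    (hfS : Integrable ⇑f (volume.restrict (Ioo (-lam) lam))) :
    ⇑(Tn lam n f) =ᵐ[volume] (Ioo (-lam) lam).indicator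
      (fun x => ∫ y in Ioo (-lam) lam,
        (∑ k ∈ Finset.range n,
          (((2 * Real.pi * (y * x) : ℝ) : ℂ) * Complex.I) ^ k / (k.factorial : ℂ)) * f y) := by
  have hb : ∀ᵐ x ∂(volume : Measure ℝ), ∀ k : ℕ,
      ⇑((((2 * ↑Real.pi * Complex.I) ^ k / (k.factorial : ℂ)) * inner ℂ (ek lam k) f) • ek lam k) x
      = (((2 * ↑Real.pi * Complex.I) ^ k / (k.factorial : ℂ)) * inner ℂ (ek lam k) f)
        * (Ioo (-lam) lam).indicator (fun t : ℝ => (t : ℂ) ^ k) x := by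
    rw [ae_all_iff]
    intro k
    filter_upwards [Lp.coeFn_smul
      ((((2 * ↑Real.pi * Complex.I) ^ k / (k.factorial : ℂ)) * inner ℂ (ek lam k) f)) (ek lam k),
      coeFn_ek lam k] with x h1 h2
    rw [h1, Pi.smul_apply, h2, smul_eq_mul]
  rw [Tn_apply]
  filter_upwards [coeFn_lp_sum (Finset.range n)
    (fun k => (((2 * ↑Real.pi * Complex.I) ^ k / (k.factorial : ℂ)) * inner ℂ (ek lam k) f)
      • ek lam k), hb] with x h1 h2
  rw [h1]
  rw [Finset.sum_congr rfl fun k _ => h2 k]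
  by_cases hx : x ∈ Ioo (-lam) lam
  · simp only [Set.indicator_of_mem hx]
    have hint : ∀ k ∈ Finset.range n,
        Integrable (fun y : ℝ =>
          (((2 * Real.pi * (y * x) : ℝ) : ℂ) * Complex.I) ^ k / (k.factorial : ℂ) * f y)
          (volume.restrict (Ioo (-lam) lam)) := by
      intro k _
      refine Integrable.bdd_mul (c := (2 * Real.pi * lam * |x|) ^ k / k.factorial) hfS ?_ ?_
      · refine Continuous.aestronglyMeasurable ?_
        fun_prop
      · filter_upwards [ae_restrict_mem measurableSet_Ioo] with y hy
        rw [norm_div, norm_pow, norm_mul, Complex.norm_real, Complex.norm_I, mul_one,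
          Complex.norm_natCast, Real.norm_eq_abs]
        have hy' : |y| ≤ lam := (abs_lt.2 ⟨hy.1, hy.2⟩).le
        have h2 : |2 * Real.pi * (y * x)| ≤ 2 * Real.pi * lam * |x| := by
          calc |2 * Real.pi * (y * x)| = 2 * Real.pi * (|y| * |x|) := by
                rw [abs_mul, abs_mul, abs_mul, abs_of_pos Real.pi_pos]; norm_num
            _ ≤ 2 * Real.pi * (lam * |x|) := by gcongr
            _ = 2 * Real.pi * lam * |x| := by ring
        gcongr
    calc ∑ k ∈ Finset.range n,
          ((2 * ↑Real.pi * Complex.I) ^ k / (k.factorial : ℂ) * inner ℂ (ek lam k) f)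
            * (x : ℂ) ^ k
        = ∑ k ∈ Finset.range n, ∫ y in Ioo (-lam) lam,
            (((2 * Real.pi * (y * x) : ℝ) : ℂ) * Complex.I) ^ k / (k.factorial : ℂ) * f y := by
          refine Finset.sum_congr rfl fun k _ => ?_
          rw [inner_ek, ← MeasureTheory.integral_const_mul, ← MeasureTheory.integral_mul_const]
          refine integral_congr_ae (Filter.Eventually.of_forall fun y => ?_)
          push_cast
          ring
      _ = ∫ y in Ioo (-lam) lam, ∑ k ∈ Finset.range n,
            (((2 * Real.pi * (y * x) : ℝ) : ℂ) * Complex.I) ^ k / (k.factorial : ℂ) * f y :=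
          (integral_finset_sum _ hint).symm
      _ = ∫ y in Ioo (-lam) lam,
            (∑ k ∈ Finset.range n,
              (((2 * Real.pi * (y * x) : ℝ) : ℂ) * Complex.I) ^ k / (k.factorial : ℂ)) * f y := by
          refine integral_congr_ae (Filter.Eventually.of_forall fun y => ?_)
          simp only [Finset.sum_mul]
  · rw [Set.indicator_of_notMem hx]
    simp [Set.indicator_of_notMem hx]

lemma coeFn_G (F : H ≃ₗᵢ[ℂ] H) (hF : IsFourierPlancherel F) (f : H)
    (hfS : Integrable ⇑f (volume.restrict (Ioo (-lam) lam))) :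
    ⇑(Pproj lam (F (Pproj lam f))) =ᵐ[volume] (Ioo (-lam) lam).indicator
      (fun x => ∫ y in Ioo (-lam) lam,
        Complex.exp (((2 * Real.pi * (y * x) : ℝ) : ℂ) * Complex.I) * f y) := by
  have hu : MemLp ((Ioo (-lam) lam).indicator ⇑f) 2 volume :=
    (Lp.memLp f).indicator measurableSet_Ioo
  have huI : Integrable ((Ioo (-lam) lam).indicator ⇑f) volume :=
    (integrable_indicator_iff measurableSet_Ioo).2 hfS
  have h1 : ⇑(F (Pproj lam f)) =ᵐ[volume]
      𝓕⁻ ((Ioo (-lam) lam).indicator ⇑f) :=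
    hF _ huI hu
  have h2 : ∀ x : ℝ, 𝓕⁻ ((Ioo (-lam) lam).indicator ⇑f) x
      = ∫ y in Ioo (-lam) lam,
          Complex.exp (((2 * Real.pi * (y * x) : ℝ) : ℂ) * Complex.I) * f y := by
    intro x
    rw [Real.fourierInv_eq', ← integral_indicator measurableSet_Ioo]
    refine integral_congr_ae (Filter.Eventually.of_forall fun y => ?_)
    by_cases hy : y ∈ Ioo (-lam) lam
    · simp only [Set.indicator_of_mem hy, RCLike.inner_apply, conj_trivial, smul_eq_mul, mul_comm x y]
    · simp [Set.indicator_of_notMem hy]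
  filter_upwards [coeFn_Pproj lam (F (Pproj lam f)), h1.indicator (s := Ioo (-lam) lam)]
    with x e1 e2
  rw [e1, e2]
  by_cases hx : x ∈ Ioo (-lam) lam
  · rw [Set.indicator_of_mem hx, Set.indicator_of_mem hx, h2]
  · rw [Set.indicator_of_notMem hx, Set.indicator_of_notMem hx]

/-! ### The operator norm estimate -/

lemma norm_G_sub_Tn_le (hlam : 0 < lam) (F : H ≃ₗᵢ[ℂ] H) (hF : IsFourierPlancherel F)
    (n : ℕ) (f : H) :
    ‖Pproj lam (F (Pproj lam f)) - Tn lam n f‖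
      ≤ (2 * lam) * expTail (2 * Real.pi * lam * lam) n * ‖f‖ := by
  have hfS : Integrable ⇑f (volume.restrict (Ioo (-lam) lam)) :=
    ((Lp.memLp f).restrict _).integrable one_le_two
  set R : ℝ := 2 * Real.pi * lam * lam with hR
  have hR0 : 0 ≤ R := by positivity
  set Cf : ℝ := ∫ y in Ioo (-lam) lam, ‖f y‖ with hCfdef
  have hCf0 : 0 ≤ Cf := integral_nonneg fun y => norm_nonneg _
  set M : ℝ := expTail R n * Cf with hM
  have hM0 : 0 ≤ M := mul_nonneg (expTail_nonneg hR0 n) hCf0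
  -- a.e. pointwise bound
  have key : ∀ᵐ x ∂(volume : Measure ℝ),
      ‖(⇑(Pproj lam (F (Pproj lam f)) - Tn lam n f)) x‖
      ≤ ‖(Ioo (-lam) lam).indicator (fun _ => (M : ℂ)) x‖ := by
    filter_upwards [Lp.coeFn_sub (Pproj lam (F (Pproj lam f))) (Tn lam n f),
      coeFn_G lam F hF f hfS, coeFn_Tn lam n f hfS] with x h0 h1 h2
    rw [h0, Pi.sub_apply, h1, h2]
    by_cases hx : x ∈ Ioo (-lam) lam
    · rw [Set.indicator_of_mem hx, Set.indicator_of_mem hx, Set.indicator_of_mem hx]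
      have hIexp : Integrable (fun y : ℝ =>
          Complex.exp (((2 * Real.pi * (y * x) : ℝ) : ℂ) * Complex.I) * f y)
          (volume.restrict (Ioo (-lam) lam)) := by
        refine Integrable.bdd_mul (c := 1) hfS ?_ ?_
        · exact Continuous.aestronglyMeasurable (by fun_prop)
        · refine Filter.Eventually.of_forall fun y => ?_
          rw [Complex.norm_exp_ofReal_mul_I]
      have hIsum : Integrable (fun y : ℝ =>
          (∑ k ∈ Finset.range n,
            (((2 * Real.pi * (y * x) : ℝ) : ℂ) * Complex.I) ^ k / (k.factorial : ℂ)) * f y)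
          (volume.restrict (Ioo (-lam) lam)) := by
        refine Integrable.bdd_mul
          (c := ∑ k ∈ Finset.range n, (2 * Real.pi * lam * lam) ^ k / k.factorial) hfS ?_ ?_
        · exact Continuous.aestronglyMeasurable (by fun_prop)
        · filter_upwards [ae_restrict_mem measurableSet_Ioo] with y hy
          refine (norm_sum_le _ _).trans ?_
          refine Finset.sum_le_sum fun k _ => ?_
          rw [norm_div, norm_pow, norm_mul, Complex.norm_real, Complex.norm_I, mul_one,
            Complex.norm_natCast, Real.norm_eq_abs]
          have hy' : |y| ≤ lam := (abs_lt.2 ⟨hy.1, hy.2⟩).le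
          have hx' : |x| ≤ lam := (abs_lt.2 ⟨hx.1, hx.2⟩).le
          have habs : |2 * Real.pi * (y * x)| ≤ 2 * Real.pi * lam * lam := by
            calc |2 * Real.pi * (y * x)| = 2 * Real.pi * (|y| * |x|) := by
                  rw [abs_mul, abs_mul, abs_mul, abs_of_pos Real.pi_pos]; norm_num
              _ ≤ 2 * Real.pi * (lam * lam) := by gcongr
              _ = 2 * Real.pi * lam * lam := by ring
          gcongr
      rw [← integral_sub hIexp hIsum]
      have hkerbd : ∀ᵐ y ∂(volume.restrict (Ioo (-lam) lam)),
          ‖(Complex.exp (((2 * Real.pi * (y * x) : ℝ) : ℂ) * Complex.I)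
            - ∑ k ∈ Finset.range n,
              (((2 * Real.pi * (y * x) : ℝ) : ℂ) * Complex.I) ^ k / (k.factorial : ℂ)) * f y‖
          ≤ expTail R n * ‖f y‖ := by
        filter_upwards [ae_restrict_mem measurableSet_Ioo] with y hy
        rw [norm_mul]
        have hy' : |y| ≤ lam := (abs_lt.2 ⟨hy.1, hy.2⟩).le
        have hx' : |x| ≤ lam := (abs_lt.2 ⟨hx.1, hx.2⟩).le
        have hz : ‖((2 * Real.pi * (y * x) : ℝ) : ℂ) * Complex.I‖ ≤ R := by
          rw [norm_mul, Complex.norm_real, Complex.norm_I, mul_one, Real.norm_eq_abs]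
          calc |2 * Real.pi * (y * x)| = 2 * Real.pi * (|y| * |x|) := by
                rw [abs_mul, abs_mul, abs_mul, abs_of_pos Real.pi_pos]; norm_num
            _ ≤ 2 * Real.pi * (lam * lam) := by gcongr
            _ = R := by rw [hR]; ring
        exact mul_le_mul_of_nonneg_right (exp_partial_bound hz n) (norm_nonneg _)
      calc ‖∫ y in Ioo (-lam) lam,
            (Complex.exp (((2 * Real.pi * (y * x) : ℝ) : ℂ) * Complex.I) * f y
              - (∑ k ∈ Finset.range n,
                (((2 * Real.pi * (y * x) : ℝ) : ℂ) * Complex.I) ^ k / (k.factorial : ℂ)) * f y)‖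
          = ‖∫ y in Ioo (-lam) lam,
              (Complex.exp (((2 * Real.pi * (y * x) : ℝ) : ℂ) * Complex.I)
                - ∑ k ∈ Finset.range n,
                  (((2 * Real.pi * (y * x) : ℝ) : ℂ) * Complex.I) ^ k / (k.factorial : ℂ))
                * f y‖ := by
            congr 1
            refine integral_congr_ae (Filter.Eventually.of_forall fun y => ?_)
            simp only [Pi.sub_apply]
            ring
        _ ≤ ∫ y in Ioo (-lam) lam,
              ‖(Complex.exp (((2 * Real.pi * (y * x) : ℝ) : ℂ) * Complex.I)
                - ∑ k ∈ Finset.range n,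
                  (((2 * Real.pi * (y * x) : ℝ) : ℂ) * Complex.I) ^ k / (k.factorial : ℂ))
                * f y‖ := norm_integral_le_integral_norm _
        _ ≤ ∫ y in Ioo (-lam) lam, expTail R n * ‖f y‖ := by
            refine integral_mono_ae ?_ (hfS.norm.const_mul _) hkerbd
            exact ((hIexp.sub hIsum).congr (Filter.Eventually.of_forall fun y => by simp only [Pi.sub_apply]; ring)).norm
        _ = expTail R n * Cf := by rw [MeasureTheory.integral_const_mul]
        _ ≤ ‖(M : ℂ)‖ := by
            rw [Complex.norm_real, Real.norm_eq_abs, hM]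
            exact le_abs_self _
    · simp [Set.indicator_of_notMem hx]
  -- conclude via eLpNorm comparisons
  have h5 : eLpNorm ((Ioo (-lam) lam).indicator fun _ => (M : ℂ)) 2 volume
      = (‖(M : ℂ)‖₊ : ℝ≥0∞) * (volume (Ioo (-lam) lam)) ^ (1 / (2 : ℝ≥0∞).toReal) :=
    eLpNorm_indicator_const measurableSet_Ioo two_ne_zero ENNReal.ofNat_ne_top
  have hvol : volume (Ioo (-lam) lam) = ENNReal.ofReal (2 * lam) := by
    rw [Real.volume_Ioo]; ring_nf
  have h3 : ‖Pproj lam (F (Pproj lam f)) - Tn lam n f‖ ≤ M * (2 * lam) ^ (1/2 : ℝ) := by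
    rw [Lp.norm_def]
    have h4 := (eLpNorm_mono_ae (p := (2 : ℝ≥0∞)) key).trans h5.le
    have hfin : (‖(M : ℂ)‖₊ : ℝ≥0∞) * (volume (Ioo (-lam) lam)) ^ (1 / (2 : ℝ≥0∞).toReal) ≠ ⊤ := by
      refine ENNReal.mul_ne_top ENNReal.coe_ne_top ?_
      rw [hvol]
      exact ENNReal.rpow_ne_top_of_nonneg (by norm_num) ENNReal.ofReal_ne_top
    refine (ENNReal.toReal_mono hfin h4).trans ?_
    rw [ENNReal.toReal_mul, hvol, ← ENNReal.toReal_rpow, ENNReal.toReal_ofReal (by positivity),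
      ENNReal.coe_toReal, coe_nnnorm, Complex.norm_real, Real.norm_eq_abs, _root_.abs_of_nonneg hM0]
    norm_num
  have h6 : Cf ≤ (2 * lam) ^ (1/2 : ℝ) * ‖f‖ := by
    have e1 : Cf = (eLpNorm ⇑f 1 (volume.restrict (Ioo (-lam) lam))).toReal := by
      rw [hCfdef, integral_norm_eq_lintegral_enorm hfS.1, eLpNorm_one_eq_lintegral_enorm]
    have e2 := eLpNorm_le_eLpNorm_mul_rpow_measure_univ (p := 1) (q := 2)
      one_le_two (hfS.1)
    have e3 : eLpNorm ⇑f 2 (volume.restrict (Ioo (-lam) lam)) ≤ eLpNorm ⇑f 2 volume :=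
      eLpNorm_mono_measure _ Measure.restrict_le_self
    have e4 : (volume.restrict (Ioo (-lam) lam)) Set.univ = ENNReal.ofReal (2 * lam) := by
      rw [Measure.restrict_apply_univ, hvol]
    have e5 : eLpNorm ⇑f 1 (volume.restrict (Ioo (-lam) lam))
        ≤ eLpNorm ⇑f 2 volume * ENNReal.ofReal (2 * lam) ^ (1/2 : ℝ) := by
      refine e2.trans ?_
      rw [e4]
      have : (1 / (1 : ℝ≥0∞).toReal - 1 / (2 : ℝ≥0∞).toReal) = (1/2 : ℝ) := by norm_num
      rw [this]
      exact mul_le_mul_left e3 _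
    have hfin2 : eLpNorm ⇑f 2 volume * ENNReal.ofReal (2 * lam) ^ (1/2 : ℝ) ≠ ⊤ :=
      ENNReal.mul_ne_top (Lp.eLpNorm_ne_top f)
        (ENNReal.rpow_ne_top_of_nonneg (by norm_num) ENNReal.ofReal_ne_top)
    rw [e1]
    refine (ENNReal.toReal_mono hfin2 e5).trans ?_
    rw [ENNReal.toReal_mul, ← ENNReal.toReal_rpow, ENNReal.toReal_ofReal (by positivity),
      ← Lp.norm_def]
    ring_nf
    exact le_refl _
  have hhalf : ((2 * lam) ^ (1/2 : ℝ)) * ((2 * lam) ^ (1/2 : ℝ)) = 2 * lam := by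
    rw [← Real.rpow_add (by positivity)]
    norm_num
  calc ‖Pproj lam (F (Pproj lam f)) - Tn lam n f‖ ≤ M * (2 * lam) ^ (1/2 : ℝ) := h3
    _ = expTail R n * Cf * (2 * lam) ^ (1/2 : ℝ) := by rw [hM]
    _ ≤ expTail R n * ((2 * lam) ^ (1/2 : ℝ) * ‖f‖) * (2 * lam) ^ (1/2 : ℝ) := by
        gcongr
        exact expTail_nonneg hR0 n
    _ = ((2 * lam) ^ (1/2 : ℝ) * (2 * lam) ^ (1/2 : ℝ)) * (expTail R n * ‖f‖) := by ring
    _ = (2 * lam) * expTail R n * ‖f‖ := by rw [hhalf]; ring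

end FlambdaProof

open FlambdaProof Filter Topology

/-- For every `λ > 0`, the operator `F_λ = P_λ ℱ P_λ` is a compact operator on `L²(ℝ)`. -/
theorem Flambda_isCompactOperator (lam : ℝ) (hlam : 0 < lam)
    (F : Lp ℂ 2 (volume : Measure ℝ) ≃ₗᵢ[ℂ] Lp ℂ 2 (volume : Measure ℝ))
    (hF : IsFourierPlancherel F) :
    IsCompactOperator (fun f : Lp ℂ 2 (volume : Measure ℝ) =>
      Pproj lam (F (Pproj lam f))) := by
  classical
  set G : Lp ℂ 2 (volume : Measure ℝ) →L[ℂ] Lp ℂ 2 (volume : Measure ℝ) :=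
    (PprojCLM lam).comp
      ((F.toContinuousLinearEquiv.toContinuousLinearMap).comp (PprojCLM lam)) with hG
  have hGapply : ∀ f, G f = Pproj lam (F (Pproj lam f)) := fun f => rfl
  have hGfun : (fun f : Lp ℂ 2 (volume : Measure ℝ) => Pproj lam (F (Pproj lam f))) = ⇑G := by
    funext f
    rw [hGapply]
  rw [hGfun]
  have hR0 : 0 ≤ 2 * Real.pi * lam * lam := by positivity
  have hnorm : ∀ n, ‖Tn lam n - G‖ ≤ (2 * lam) * expTail (2 * Real.pi * lam * lam) n := by
    intro n
    rw [norm_sub_rev]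
    refine ContinuousLinearMap.opNorm_le_bound _
      (mul_nonneg (by positivity) (expTail_nonneg hR0 n)) fun f => ?_
    rw [ContinuousLinearMap.sub_apply, hGapply]
    exact norm_G_sub_Tn_le lam hlam F hF n f
  have htend : Tendsto (fun n => Tn lam n) atTop (𝓝 G) := by
    rw [tendsto_iff_norm_sub_tendsto_zero]
    refine squeeze_zero (fun n => norm_nonneg _) hnorm ?_
    have := (tendsto_expTail (2 * Real.pi * lam * lam)).const_mul (2 * lam)
    simpa using this
  exact isCompactOperator_of_tendsto htend
    (Filter.Eventually.of_forall fun n => isCompactOperator_Tn lam n)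
end
end

section
/- For every λ > 0 there exists a constant c < 1 such that for every u ∈ L²(ℝ) vanishing a.e. outside (−λ,λ) one has ‖P_λ ℱ u‖_{L²} ≤ c‖u‖_{L²}; in other words, the operator norm of F_λ = P_λ ℱ P_λ restricted to L²(−λ,λ) is strictly less than 1. -/
set_option maxHeartbeats 1000000
set_option synthInstance.maxHeartbeats 400000

open MeasureTheory Complex Set FourierTransform

noncomputable section

open Real Filter ENNReal

variable {lam : ℝ}

lemma Pproj_coeFn (f : Lp ℂ 2 (volume : Measure ℝ)) :
    (Pproj lam f : ℝ → ℂ) =ᵐ[volume] (Ioo (-lam) lam).indicator f :=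
  MemLp.coeFn_toLp _

lemma Pproj_eq_of_ae (f g : Lp ℂ 2 (volume : Measure ℝ))
    (h : (g : ℝ → ℂ) =ᵐ[volume] (Ioo (-lam) lam).indicator f) : Pproj lam f = g := by
  apply Lp.ext ((Pproj_coeFn f).trans h.symm)

lemma norm_Pproj_le (f : Lp ℂ 2 (volume : Measure ℝ)) : ‖Pproj lam f‖ ≤ ‖f‖ := by
  rw [Lp.norm_def, Lp.norm_def]
  refine ENNReal.toReal_mono (Lp.eLpNorm_ne_top f) ?_
  rw [eLpNorm_congr_ae (Pproj_coeFn f)]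
  exact eLpNorm_indicator_le _

lemma Pproj_sub (f g : Lp ℂ 2 (volume : Measure ℝ)) :
    Pproj lam (f - g) = Pproj lam f - Pproj lam g := by
  refine Pproj_eq_of_ae _ _ ?_
  filter_upwards [Pproj_coeFn (lam := lam) f, Pproj_coeFn (lam := lam) g,
    Lp.coeFn_sub (Pproj lam f) (Pproj lam g), Lp.coeFn_sub f g] with x h1 h2 h3 h4
  rw [h3, Pi.sub_apply, h1, h2, indicator_apply, indicator_apply, indicator_apply, h4]
  by_cases hx : x ∈ Ioo (-lam) lam <;> simp [hx]

lemma lipschitz_Pproj (f g : Lp ℂ 2 (volume : Measure ℝ)) :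
    ‖Pproj lam f - Pproj lam g‖ ≤ ‖f - g‖ := by
  rw [← Pproj_sub]; exact norm_Pproj_le _

lemma Pproj_smul (c : ℂ) (f : Lp ℂ 2 (volume : Measure ℝ)) :
    Pproj lam (c • f) = c • Pproj lam f := by
  refine Pproj_eq_of_ae _ _ ?_
  filter_upwards [Pproj_coeFn (lam := lam) f, Lp.coeFn_smul c (Pproj lam f),
    Lp.coeFn_smul c f] with x h1 h2 h3
  rw [h2, Pi.smul_apply, h1, indicator_apply, indicator_apply, h3]
  by_cases hx : x ∈ Ioo (-lam) lam <;> simp [hx]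

lemma Pproj_self (u : Lp ℂ 2 (volume : Measure ℝ))
    (hu : ∀ᵐ x : ℝ, x ∉ Ioo (-lam) lam → u x = 0) : Pproj lam u = u := by
  refine Pproj_eq_of_ae _ _ ?_
  filter_upwards [hu] with x hx
  rw [indicator_apply]
  by_cases h : x ∈ Ioo (-lam) lam <;> simp [h, hx]

lemma Pproj_idem (f : Lp ℂ 2 (volume : Measure ℝ)) : Pproj lam (Pproj lam f) = Pproj lam f := by
  apply Pproj_self
  filter_upwards [Pproj_coeFn (lam := lam) f] with x h1 hx
  rw [h1, indicator_apply, if_neg hx]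

open scoped InnerProductSpace in
lemma pythagoras (f : Lp ℂ 2 (volume : Measure ℝ)) :
    ‖f‖ * ‖f‖ = ‖Pproj lam f‖ * ‖Pproj lam f‖ + ‖f - Pproj lam f‖ * ‖f - Pproj lam f‖ := by
  have horth : ⟪Pproj lam f, f - Pproj lam f⟫_ℂ = 0 := by
    rw [MeasureTheory.L2.inner_def]
    refine integral_eq_zero_of_ae ?_
    filter_upwards [Pproj_coeFn (lam := lam) f, Lp.coeFn_sub f (Pproj lam f)] with x h1 h2
    simp only [Pi.zero_apply, h2, Pi.sub_apply, h1]
    by_cases hx : x ∈ Ioo (-lam) lam <;> simp [hx, indicator_apply]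
  have := norm_add_sq_eq_norm_sq_add_norm_sq_of_inner_eq_zero _ _ horth
  rw [add_sub_cancel] at this
  exact this


lemma norm_cexp_eq (y : ℝ) (z : ℂ) : ‖Complex.exp (((2*π*y : ℝ) : ℂ) * Complex.I * z)‖
    = Real.exp (-(2*π*y*z.im)) := by
  rw [Complex.norm_exp]
  congr 1
  simp [Complex.mul_re, Complex.mul_im]
  try ring

lemma norm_cexp_le {lam B y : ℝ} (hy : |y| ≤ lam) {z : ℂ} (hz : |z.im| ≤ B) :
    ‖Complex.exp (((2*π*y : ℝ) : ℂ) * Complex.I * z)‖ ≤ Real.exp (2*π*lam*B) := by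
  rw [norm_cexp_eq]
  apply Real.exp_le_exp.2
  have hB : 0 ≤ B := le_trans (abs_nonneg _) hz
  have h1 : -(2*π*y*z.im) ≤ |2*π*y*z.im| := neg_le_abs _
  have h2 : |2*π*y*z.im| = 2*π*(|y| * |z.im|) := by
    rw [abs_mul, abs_mul, abs_mul, _root_.abs_of_nonneg (by norm_num : (0:ℝ) ≤ 2), _root_.abs_of_nonneg Real.pi_pos.le]; ring
  have h3 : |y| * |z.im| ≤ lam*B :=
    mul_le_mul hy hz (abs_nonneg _) (le_trans (abs_nonneg _) hy)
  have hpi : (0:ℝ) < π := Real.pi_pos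
  nlinarith

lemma Hdiff {lam : ℝ} (hlam0 : 0 ≤ lam) {f : ℝ → ℂ} (hf : Integrable f)
    (hsupp : ∀ᵐ v : ℝ, v ∉ Ioo (-lam) lam → f v = 0) :
    Differentiable ℂ (fun z : ℂ => ∫ y : ℝ, Complex.exp (((2*π*y : ℝ) : ℂ) * Complex.I * z) * f y) := by
  intro z₀
  have hmeas : ∀ z : ℂ, AEStronglyMeasurable
      (fun y : ℝ => Complex.exp (((2*π*y : ℝ) : ℂ) * Complex.I * z) * f y) volume :=
    fun z => (Continuous.aestronglyMeasurable (by continuity)).mul hf.aestronglyMeasurable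
  have himb : ∀ z ∈ Metric.ball z₀ 1, |z.im| ≤ ‖z₀‖ + 1 := by
    intro z hz
    have h1 : |z.im - z₀.im| ≤ ‖z - z₀‖ := by
      simpa using Complex.abs_im_le_norm (z - z₀)
    have h2 : ‖z - z₀‖ < 1 := by simpa [Complex.dist_eq] using hz
    have h3 : |z₀.im| ≤ ‖z₀‖ := Complex.abs_im_le_norm z₀
    have h4 : |z.im| - |z₀.im| ≤ |z.im - z₀.im| := abs_sub_abs_le_abs_sub _ _
    linarith
  have key := hasDerivAt_integral_of_dominated_loc_of_deriv_le (μ := (volume : Measure ℝ))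
    (F := fun (z : ℂ) (y : ℝ) => Complex.exp (((2*π*y : ℝ) : ℂ) * Complex.I * z) * f y)
    (F' := fun (z : ℂ) (y : ℝ) =>
      Complex.exp (((2*π*y : ℝ) : ℂ) * Complex.I * z) * (((2*π*y : ℝ) : ℂ) * Complex.I) * f y)
    (x₀ := z₀) (s := Metric.ball z₀ 1)
    (bound := fun y => Real.exp (2*π*lam*(‖z₀‖+1)) * (2*π*lam) * ‖f y‖)
    (Metric.ball_mem_nhds z₀ one_pos) (Eventually.of_forall hmeas) ?_ ?_ ?_ ?_ ?_
  · exact key.2.differentiableAt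
  · -- integrability of F z₀
    refine (hf.norm.const_mul (Real.exp (2*π*lam*(‖z₀‖+1)))).mono' (hmeas z₀) ?_
    filter_upwards [hsupp] with y hy
    by_cases hyI : y ∈ Ioo (-lam) lam
    · rw [norm_mul]
      have hy1 : |y| ≤ lam := by
        rw [abs_le]; exact ⟨hyI.1.le, hyI.2.le⟩
      have := norm_cexp_le hy1 (himb z₀ (Metric.mem_ball_self one_pos))
      exact mul_le_mul_of_nonneg_right this (norm_nonneg _)
    · rw [hy hyI, mul_zero, norm_zero]; positivity
  · -- measurability of F' z₀
    exact ((Continuous.aestronglyMeasurable (by continuity)).mul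
      (Continuous.aestronglyMeasurable (by continuity))).mul hf.aestronglyMeasurable
  · -- bound
    filter_upwards [hsupp] with y hy
    intro z hz
    by_cases hyI : y ∈ Ioo (-lam) lam
    · have hy1 : |y| ≤ lam := by rw [abs_le]; exact ⟨hyI.1.le, hyI.2.le⟩
      have hlam0 : 0 ≤ lam := le_trans (abs_nonneg y) hy1
      rw [norm_mul, norm_mul]
      have h1 := norm_cexp_le hy1 (himb z hz)
      have h2 : ‖((2*π*y : ℝ) : ℂ) * Complex.I‖ ≤ 2*π*lam := by
        rw [norm_mul, Complex.norm_I, mul_one, Complex.norm_real, Real.norm_eq_abs]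
        have : |2*π*y| = 2*π*|y| := by
          rw [abs_mul, abs_mul, _root_.abs_of_nonneg (by norm_num : (0:ℝ) ≤ 2), _root_.abs_of_nonneg Real.pi_pos.le]
        rw [this]
        nlinarith [Real.pi_pos]
      have := mul_le_mul h1 h2 (norm_nonneg _) (Real.exp_nonneg _)
      exact mul_le_mul_of_nonneg_right this (norm_nonneg _)
    · rw [hy hyI, mul_zero, norm_zero]; positivity
  · exact (hf.norm.const_mul _)
  · -- differentiability
    refine Eventually.of_forall fun y => fun z _ => ?_
    have h := (((hasDerivAt_id z).const_mul (((2*π*y : ℝ) : ℂ) * Complex.I)).cexp).mul_const (f y)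
    simpa [mul_comm, mul_assoc, mul_left_comm] using h

lemma contInv {f : ℝ → ℂ} (hf : Integrable f) : Continuous (𝓕⁻ f) := by
  apply VectorFourier.fourierIntegral_continuous Real.continuous_fourierChar ?_ hf
  exact (continuous_fst.inner continuous_snd).neg

lemma H_eq_inv {f : ℝ → ℂ} (x : ℝ) :
    (∫ y : ℝ, Complex.exp (((2*π*y : ℝ) : ℂ) * Complex.I * ((x : ℝ) : ℂ)) * f y) = 𝓕⁻ f x := by
  rw [Real.fourierInv_eq']
  apply integral_congr_ae
  apply Eventually.of_forall
  intro v
  show Complex.exp (((2*π*v : ℝ) : ℂ) * Complex.I * ((x : ℝ) : ℂ)) * f v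
      = Complex.exp (((2 * π * (inner ℝ v x : ℝ) : ℝ) : ℂ) * Complex.I) • f v
  rw [smul_eq_mul]
  congr 2
  have : (inner ℝ v x : ℝ) = v * x := Real.inner_apply v x
  rw [this]
  push_cast
  ring

lemma key_vanish {lam : ℝ} (hlam : 0 < lam) {f : ℝ → ℂ} (hf : Integrable f)
    (hsupp : ∀ᵐ v : ℝ, v ∉ Ioo (-lam) lam → f v = 0)
    (hzero : ∀ᵐ x : ℝ, x ∉ Ioo (-lam) lam → 𝓕⁻ f x = 0) :
    ∀ x : ℝ, 𝓕⁻ f x = 0 := by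
  set H : ℂ → ℂ := fun z => ∫ y : ℝ, Complex.exp (((2*π*y : ℝ) : ℂ) * Complex.I * z) * f y with hH
  have hdiff : Differentiable ℂ H := Hdiff hlam.le hf hsupp
  have hcont : Continuous (𝓕⁻ f) := contInv hf
  -- 𝓕⁻ f vanishes on (lam, ∞)
  have hIoi : EqOn (𝓕⁻ f) 0 (Ioi lam) := by
    apply Measure.eqOn_of_ae_eq (μ := (volume : Measure ℝ)) ?_ hcont.continuousOn
      continuousOn_const ?_
    · rw [EventuallyEq, ae_restrict_iff' measurableSet_Ioi]
      filter_upwards [hzero] with x hx hxI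
      have : x ∉ Ioo (-lam) lam := fun h => absurd h.2 (not_lt.2 (le_of_lt hxI))
      exact hx this
    · rw [interior_Ioi]
      exact subset_closure
  -- frequently zero near lam + 1
  have hfreq : ∃ᶠ z in nhdsWithin ((lam + 1 : ℝ) : ℂ) {((lam + 1 : ℝ) : ℂ)}ᶜ, H z = 0 := by
    have hseq : Filter.Tendsto (fun n : ℕ => (((lam + 1 + 1/(n+1) : ℝ)) : ℂ)) atTop
        (nhdsWithin ((lam + 1 : ℝ) : ℂ) {((lam + 1 : ℝ) : ℂ)}ᶜ) := by
      apply tendsto_nhdsWithin_of_tendsto_nhds_of_eventually_within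
      · apply (Complex.continuous_ofReal.tendsto _).comp
        have : Filter.Tendsto (fun n : ℕ => (lam + 1 + 1/(n+1) : ℝ)) atTop (nhds (lam + 1 + 0)) := by
          apply Filter.Tendsto.add tendsto_const_nhds
          exact tendsto_one_div_add_atTop_nhds_zero_nat
        simpa using this
      · apply Eventually.of_forall
        intro n
        simp only [mem_compl_iff, mem_singleton_iff]
        intro h
        have := Complex.ofReal_injective h
        have hn : (0:ℝ) < 1/(n+1) := by positivity
        linarith
    apply hseq.frequently
    apply Filter.Frequently.of_forall
    intro n
    have hx : (lam + 1 + 1/(n+1) : ℝ) ∈ Ioi lam := by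
      have hn : (0:ℝ) < 1/(n+1) := by positivity
      simp only [mem_Ioi]; linarith
    have := hIoi hx
    rw [← H_eq_inv] at this
    exact this
  have hzeroH : EqOn H 0 univ := by
    apply AnalyticOnNhd.eqOn_zero_of_preconnected_of_frequently_eq_zero
      (hdiff.differentiableOn.analyticOnNhd isOpen_univ) isPreconnected_univ (mem_univ _) hfreq
  intro x
  rw [← H_eq_inv]
  exact hzeroH (mem_univ _)


variable {lam : ℝ}

-- finite half-power of the measure of the interval
lemma vI_lt_top (lam : ℝ) : (volume (Ioo (-lam) lam)) ^ (2⁻¹ : ℝ) < ⊤ := by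
  apply ENNReal.rpow_lt_top_of_nonneg (by norm_num)
  exact (measure_Ioo_lt_top).ne

/-- L¹ bound for supported L² functions -/
lemma integrable_of_supported {u : Lp ℂ 2 (volume : Measure ℝ)}
    (hu : ∀ᵐ x : ℝ, x ∉ Ioo (-lam) lam → u x = 0) :
    Integrable (u : ℝ → ℂ) volume ∧
      ∫ y : ℝ, ‖(u : ℝ → ℂ) y‖ ≤ ((volume (Ioo (-lam) lam)) ^ (2⁻¹ : ℝ)).toReal * ‖u‖ := by
  have hind : (u : ℝ → ℂ) =ᵐ[volume] (Ioo (-lam) lam).indicator u := by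
    filter_upwards [hu] with x hx
    rw [indicator_apply]
    by_cases h : x ∈ Ioo (-lam) lam <;> simp [h, hx]
  have hmeas : AEStronglyMeasurable (u : ℝ → ℂ) (volume.restrict (Ioo (-lam) lam)) :=
    (Lp.aestronglyMeasurable u).restrict
  have h1 : eLpNorm (u : ℝ → ℂ) 1 (volume.restrict (Ioo (-lam) lam))
      ≤ eLpNorm (u : ℝ → ℂ) 2 (volume.restrict (Ioo (-lam) lam))
        * (volume (Ioo (-lam) lam)) ^ (2⁻¹ : ℝ) := by
    have := eLpNorm_le_eLpNorm_mul_rpow_measure_univ (p := 1) (q := 2)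
      (μ := volume.restrict (Ioo (-lam) lam)) one_le_two hmeas
    rwa [Measure.restrict_apply_univ, show (1 / (1:ℝ≥0∞).toReal - 1 / (2:ℝ≥0∞).toReal) = (2⁻¹ : ℝ) by norm_num] at this
  have h2 : eLpNorm (u : ℝ → ℂ) 2 (volume.restrict (Ioo (-lam) lam)) ≤ eLpNorm (u : ℝ → ℂ) 2 volume :=
    eLpNorm_mono_measure _ Measure.restrict_le_self
  have h2' : eLpNorm (u : ℝ → ℂ) 2 volume < ⊤ := Lp.eLpNorm_lt_top u
  have h1' : eLpNorm (u : ℝ → ℂ) 1 volume = eLpNorm (u : ℝ → ℂ) 1 (volume.restrict (Ioo (-lam) lam)) := by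
    rw [eLpNorm_congr_ae hind, eLpNorm_indicator_eq_eLpNorm_restrict measurableSet_Ioo]
  have hfin : eLpNorm (u : ℝ → ℂ) 1 volume < ⊤ := by
    rw [h1']
    exact lt_of_le_of_lt h1 (ENNReal.mul_lt_top (lt_of_le_of_lt h2 h2') (vI_lt_top lam))
  have hint : Integrable (u : ℝ → ℂ) volume := by
    rw [← memLp_one_iff_integrable]
    exact ⟨Lp.aestronglyMeasurable u, hfin⟩
  refine ⟨hint, ?_⟩
  have : ∫ y : ℝ, ‖(u : ℝ → ℂ) y‖ = (eLpNorm (u : ℝ → ℂ) 1 volume).toReal := by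
    rw [integral_norm_eq_lintegral_enorm (Lp.aestronglyMeasurable u),
      eLpNorm_one_eq_lintegral_enorm]
  rw [this, Lp.norm_def]
  calc (eLpNorm (u : ℝ → ℂ) 1 volume).toReal
      ≤ ((volume (Ioo (-lam) lam)) ^ (2⁻¹ : ℝ) * eLpNorm (u : ℝ → ℂ) 2 volume).toReal := by
        apply ENNReal.toReal_mono
        · exact (ENNReal.mul_lt_top (vI_lt_top lam) h2').ne
        · rw [h1']
          exact le_trans h1 (by rw [mul_comm]; exact mul_le_mul_right h2 _)
    _ = ((volume (Ioo (-lam) lam)) ^ (2⁻¹ : ℝ)).toReal * (eLpNorm (u : ℝ → ℂ) 2 volume).toReal := by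
        rw [ENNReal.toReal_mul]

lemma integrable_exp_smul {f : ℝ → ℂ} (hf : Integrable f) (x : ℝ) :
    Integrable (fun v : ℝ => Complex.exp (((2 * π * (inner ℝ v x : ℝ) : ℝ) : ℂ) * Complex.I) • f v) := by
  refine hf.norm.mono' ((Continuous.aestronglyMeasurable
    (f := fun v : ℝ => Complex.exp (((2 * π * (inner ℝ v x : ℝ) : ℝ) : ℂ) * Complex.I)) ?_).smul hf.aestronglyMeasurable) ?_
  · apply Complex.continuous_exp.comp
    continuity
  · refine Eventually.of_forall fun v => ?_
    rw [norm_smul, Complex.norm_exp]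
    simp

lemma lipschitz_inv {lam : ℝ} (hlam0 : 0 ≤ lam) {f : ℝ → ℂ} (hf : Integrable f)
    (hsupp : ∀ᵐ v : ℝ, v ∉ Ioo (-lam) lam → f v = 0) (x x' : ℝ) :
    ‖𝓕⁻ f x - 𝓕⁻ f x'‖ ≤ 2*π*lam*(∫ y : ℝ, ‖f y‖)*|x - x'| := by
  have heq : 𝓕⁻ f x - 𝓕⁻ f x'
      = ∫ v : ℝ, (Complex.exp (((2 * π * (inner ℝ v x : ℝ) : ℝ) : ℂ) * Complex.I)
          - Complex.exp (((2 * π * (inner ℝ v x' : ℝ) : ℝ) : ℂ) * Complex.I)) • f v := by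
    rw [Real.fourierInv_eq', Real.fourierInv_eq',
      ← integral_sub (integrable_exp_smul hf x) (integrable_exp_smul hf x')]
    congr 1
    ext v
    rw [sub_smul]
  rw [heq]
  have hbound : ∀ᵐ v : ℝ ∂volume, ‖(Complex.exp (((2 * π * (inner ℝ v x : ℝ) : ℝ) : ℂ) * Complex.I)
      - Complex.exp (((2 * π * (inner ℝ v x' : ℝ) : ℝ) : ℂ) * Complex.I)) • f v‖
      ≤ 2*π*lam*|x - x'| * ‖f v‖ := by
    filter_upwards [hsupp] with v hv
    by_cases hvI : v ∈ Ioo (-lam) lam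
    · rw [norm_smul]
      have hlip : ‖Complex.exp (((2 * π * (inner ℝ v x : ℝ) : ℝ) : ℂ) * Complex.I)
          - Complex.exp (((2 * π * (inner ℝ v x' : ℝ) : ℝ) : ℂ) * Complex.I)‖
          ≤ |2 * π * (inner ℝ v x : ℝ) - 2 * π * (inner ℝ v x' : ℝ)| := by
        have := (lipschitzWith_circleMap 0 1).dist_le_mul (2 * π * (inner ℝ v x : ℝ)) (2 * π * (inner ℝ v x' : ℝ))
        simpa [circleMap, Complex.dist_eq, Real.dist_eq] using this
      have hv1 : |v| ≤ lam := by rw [abs_le]; exact ⟨hvI.1.le, hvI.2.le⟩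
      have hinner : ∀ w : ℝ, (inner ℝ v w : ℝ) = v * w := fun w => Real.inner_apply v w
      rw [hinner, hinner] at hlip
      have habs : |2 * π * (v * x) - 2 * π * (v * x')| = 2*π*(|v| * |x - x'|) := by
        rw [show 2 * π * (v * x) - 2 * π * (v * x') = (2*π*v)*(x - x') by ring, abs_mul,
          abs_mul, abs_mul, _root_.abs_of_nonneg (by norm_num : (0:ℝ) ≤ 2),
          _root_.abs_of_nonneg Real.pi_pos.le]
        ring
      simp only [hinner]
      refine mul_le_mul ?_ le_rfl (norm_nonneg _) (by positivity)
      refine le_trans (hlip.trans (le_of_eq habs)) ?_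
      have hpi := Real.pi_pos
      have h2 := abs_nonneg (x - x')
      nlinarith [abs_nonneg v, mul_le_mul_of_nonneg_right hv1 h2]
    · rw [hv hvI]
      simp only [smul_zero, norm_zero, norm_zero, mul_zero]
      positivity
  refine le_trans (norm_integral_le_of_norm_le (hf.norm.const_mul (2*π*lam*|x - x'|)) hbound) ?_
  rw [integral_const_mul]
  apply le_of_eq
  ring


lemma exists_subseq_unif_cauchy {lam M L : ℝ} (g : ℕ → ℝ → ℂ)
    (hcont : ∀ n, Continuous (g n))
    (hbd : ∀ n x, ‖g n x‖ ≤ M)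
    (hlip : ∀ n x x', ‖g n x - g n x'‖ ≤ L * |x - x'|) :
    ∃ σ : ℕ → ℕ, StrictMono σ ∧ ∀ ε : ℝ, 0 < ε → ∃ N : ℕ, ∀ k ≥ N, ∀ l ≥ N,
      ∀ x ∈ Icc (-lam) lam, ‖g (σ k) x - g (σ l) x‖ ≤ ε := by
  haveI : CompactSpace (Icc (-lam) lam) := isCompact_iff_compactSpace.1 isCompact_Icc
  set K := Icc (-lam) lam
  set φ : ℕ → BoundedContinuousFunction K ℂ := fun n =>
    BoundedContinuousFunction.ofNormedAddCommGroup (fun t : K => g n t)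
      ((hcont n).comp continuous_subtype_val) M (fun t => hbd n t) with hφ
  set A : Set (BoundedContinuousFunction K ℂ) :=
    {ψ | (∀ t : K, ‖ψ t‖ ≤ M) ∧ ∀ s t : K, dist (ψ s) (ψ t) ≤ L * dist (s:ℝ) (t:ℝ)} with hA
  have hφA : ∀ n, φ n ∈ A := by
    intro n
    constructor
    · intro t; exact hbd n t
    · intro s t
      rw [dist_eq_norm]
      have := hlip n s t
      rw [Real.dist_eq]; exact this
  have hcompact : IsCompact (closure A) := by
    refine BoundedContinuousFunction.arzela_ascoli (Metric.closedBall (0:ℂ) M)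
      (isCompact_closedBall _ _) A ?_ ?_
    · intro ψ x hψ
      rw [Metric.mem_closedBall, dist_zero_right]
      exact hψ.1 x
    · apply Metric.equicontinuous_of_continuity_modulus (fun t => |L| * t)
      · have : Tendsto (fun t : ℝ => |L| * t) (nhds 0) (nhds (|L| * 0)) :=
          (tendsto_id.const_mul _)
        simpa using this
      · rintro x y ⟨ψ, hψ⟩
        calc dist (ψ x) (ψ y) ≤ L * dist (x:ℝ) (y:ℝ) := hψ.2 x y
          _ ≤ |L| * dist (x:ℝ) (y:ℝ) := by
              have h0 : (0:ℝ) ≤ dist (x:ℝ) (y:ℝ) := dist_nonneg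
              nlinarith [le_abs_self L]
          _ = |L| * dist x y := by rw [Subtype.dist_eq]
  obtain ⟨ψ₀, -, σ, hσ, hconv⟩ := hcompact.tendsto_subseq (fun n => subset_closure (hφA n))
  refine ⟨σ, hσ, ?_⟩
  intro ε hε
  have hcauchy : CauchySeq (fun k => φ (σ k)) := hconv.cauchySeq
  obtain ⟨N, hN⟩ := Metric.cauchySeq_iff.1 hcauchy ε hε
  refine ⟨N, fun k hk l hl x hx => ?_⟩
  have h1 : dist (φ (σ k)) (φ (σ l)) < ε := hN k hk l hl
  have h2 : dist (φ (σ k) ⟨x, hx⟩) (φ (σ l) ⟨x, hx⟩) ≤ dist (φ (σ k)) (φ (σ l)) :=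
    BoundedContinuousFunction.dist_coe_le_dist _
  rw [dist_eq_norm] at h2
  have : (φ (σ k)) ⟨x, hx⟩ = g (σ k) x := rfl
  calc ‖g (σ k) x - g (σ l) x‖ = ‖φ (σ k) ⟨x, hx⟩ - φ (σ l) ⟨x, hx⟩‖ := rfl
    _ ≤ dist (φ (σ k)) (φ (σ l)) := h2
    _ ≤ ε := h1.le


lemma Pproj_continuous {lam : ℝ} : Continuous (Pproj lam) := by
  apply LipschitzWith.continuous (K := 1)
  apply LipschitzWith.of_dist_le_mul
  intro f g
  rw [dist_eq_norm, dist_eq_norm]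
  simpa using lipschitz_Pproj f g

lemma Pproj_zero {lam : ℝ} : Pproj lam (0 : Lp ℂ 2 (volume : Measure ℝ)) = 0 := by
  refine Pproj_eq_of_ae _ _ ?_
  filter_upwards [Lp.coeFn_zero ℂ 2 (volume : Measure ℝ)] with x hx
  rw [hx, indicator_apply]
  by_cases h : x ∈ Ioo (-lam) lam <;> simp [h, hx]

/-- For every `λ > 0` there is a constant `c < 1` such that for every `u ∈ L²(ℝ)` vanishing
a.e. outside `(−λ,λ)` one has `‖P_λ ℱ u‖ ≤ c ‖u‖`: the operator norm of `F_λ = P_λ ℱ P_λ`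
restricted to `L²(−λ,λ)` is strictly less than `1`. -/
theorem Flambda_norm_lt_one (lam : ℝ) (hlam : 0 < lam)
    (F : Lp ℂ 2 (volume : Measure ℝ) ≃ₗᵢ[ℂ] Lp ℂ 2 (volume : Measure ℝ))
    (hF : IsFourierPlancherel F) :
    ∃ c : ℝ, c < 1 ∧
      ∀ u : Lp ℂ 2 (volume : Measure ℝ),
        (∀ᵐ x : ℝ, x ∉ Ioo (-lam) lam → u x = 0) →
        ‖Pproj lam (F u)‖ ≤ c * ‖u‖ := by
  classical
  set A : Set ℝ := {r : ℝ | ∃ u : Lp ℂ 2 (volume : Measure ℝ),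
    (∀ᵐ x : ℝ, x ∉ Ioo (-lam) lam → u x = 0) ∧ ‖u‖ ≤ 1 ∧ r = ‖Pproj lam (F u)‖} with hA
  have hzero_supported : (∀ᵐ x : ℝ, x ∉ Ioo (-lam) lam → (0 : Lp ℂ 2 (volume : Measure ℝ)) x = 0) := by
    filter_upwards [Lp.coeFn_zero ℂ 2 (volume : Measure ℝ)] with x hx _
    exact hx
  have h0A : (0 : ℝ) ∈ A := by
    refine ⟨0, hzero_supported, by simp, ?_⟩
    rw [map_zero, Pproj_zero, norm_zero]
  have hne : A.Nonempty := ⟨0, h0A⟩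
  have hbdd : ∀ r ∈ A, r ≤ 1 := by
    rintro r ⟨u, hsupp, hle, rfl⟩
    calc ‖Pproj lam (F u)‖ ≤ ‖F u‖ := norm_Pproj_le _
      _ = ‖u‖ := F.norm_map u
      _ ≤ 1 := hle
  have hbddAbove : BddAbove A := ⟨1, hbdd⟩
  set c := sSup A with hc
  have hc1 : c ≤ 1 := csSup_le hne hbdd
  have hc0 : 0 ≤ c := le_csSup hbddAbove h0A
  have hkey : ∀ u : Lp ℂ 2 (volume : Measure ℝ),
      (∀ᵐ x : ℝ, x ∉ Ioo (-lam) lam → u x = 0) → ‖Pproj lam (F u)‖ ≤ c * ‖u‖ := by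
    intro u hsupp
    by_cases hu0 : u = 0
    · rw [hu0, map_zero, Pproj_zero, norm_zero]
      positivity
    · have hnu : 0 < ‖u‖ := norm_pos_iff.2 hu0
      set a : ℂ := ((‖u‖ : ℝ) : ℂ)⁻¹ with ha
      have hna : ‖a‖ = ‖u‖⁻¹ := by
        rw [ha, norm_inv, Complex.norm_real, Real.norm_eq_abs, abs_of_pos hnu]
      have hsupp' : (∀ᵐ x : ℝ, x ∉ Ioo (-lam) lam → (a • u) x = 0) := by
        filter_upwards [hsupp, Lp.coeFn_smul a u] with x hx hx2 hxI
        rw [hx2, Pi.smul_apply, hx hxI, smul_zero]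
      have hnorm' : ‖a • u‖ = 1 := by
        rw [norm_smul, hna, inv_mul_cancel₀ hnu.ne']
      have hmem : ‖Pproj lam (F (a • u))‖ ∈ A := ⟨a • u, hsupp', hnorm'.le, rfl⟩
      have hle := le_csSup hbddAbove hmem
      rw [F.map_smul, Pproj_smul, norm_smul, hna] at hle
      calc ‖Pproj lam (F u)‖ = ‖u‖ * (‖u‖⁻¹ * ‖Pproj lam (F u)‖) := by
            field_simp
        _ ≤ ‖u‖ * c := by
            exact mul_le_mul_of_nonneg_left hle hnu.le
        _ = c * ‖u‖ := mul_comm _ _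
  by_cases hclt : c < 1
  · exact ⟨c, hclt, hkey⟩
  exfalso
  have hceq : c = 1 := le_antisymm hc1 (not_lt.1 hclt)
  -- extract an almost-maximizing sequence
  have hex : ∀ n : ℕ, ∃ u : Lp ℂ 2 (volume : Measure ℝ),
      (∀ᵐ x : ℝ, x ∉ Ioo (-lam) lam → u x = 0) ∧ ‖u‖ ≤ 1 ∧
      1 - 1/(n+1) < ‖Pproj lam (F u)‖ := by
    intro n
    have hlt : 1 - 1/((n:ℝ)+1) < c := by
      rw [hceq]
      have : (0:ℝ) < 1/((n:ℝ)+1) := by positivity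
      linarith
    obtain ⟨r, hrA, hr⟩ := exists_lt_of_lt_csSup hne hlt
    obtain ⟨u, h1, h2, rfl⟩ := hrA
    exact ⟨u, h1, h2, hr⟩
  choose u husupp hule hulow using hex
  have hupper : ∀ n : ℕ, ‖Pproj lam (F (u n))‖ ≤ 1 := fun n =>
    le_trans (norm_Pproj_le _) (by rw [F.norm_map]; exact hule n)
  have htend : Tendsto (fun n : ℕ => ‖Pproj lam (F (u n))‖) atTop (nhds 1) := by
    apply tendsto_of_tendsto_of_tendsto_of_le_of_le
      (g := fun n : ℕ => 1 - 1/((n:ℝ)+1)) (h := fun _ : ℕ => (1:ℝ))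
    · have h1 : Tendsto (fun n : ℕ => 1/((n:ℝ)+1)) atTop (nhds 0) :=
        tendsto_one_div_add_atTop_nhds_zero_nat
      have h2 := (tendsto_const_nhds (x := (1:ℝ)) (f := (atTop : Filter ℕ))).sub h1
      simpa using h2
    · exact tendsto_const_nhds
    · exact fun n => (hulow n).le
    · exact hupper
  set Mc : ℝ := ((volume (Ioo (-lam) lam)) ^ (2⁻¹ : ℝ)).toReal with hMc
  have hMc0 : 0 ≤ Mc := ENNReal.toReal_nonneg
  have hint : ∀ n, Integrable ((u n : ℝ → ℂ)) volume :=
    fun n => (integrable_of_supported (husupp n)).1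
  have hL1 : ∀ n, ∫ y : ℝ, ‖(u n : ℝ → ℂ) y‖ ≤ Mc := fun n => by
    calc ∫ y : ℝ, ‖(u n : ℝ → ℂ) y‖ ≤ Mc * ‖u n‖ := (integrable_of_supported (husupp n)).2
      _ ≤ Mc * 1 := mul_le_mul_of_nonneg_left (hule n) hMc0
      _ = Mc := mul_one _
  set g : ℕ → ℝ → ℂ := fun n => 𝓕⁻ ((u n : ℝ → ℂ)) with hg
  have hFg : ∀ n, ((F (u n)) : ℝ → ℂ) =ᵐ[volume] g n := fun n => by
    have := hF ((u n : ℝ → ℂ)) (hint n) (Lp.memLp (u n))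
    rwa [Lp.toLp_coeFn] at this
  have hgbd : ∀ n x, ‖g n x‖ ≤ Mc := fun n x =>
    le_trans (VectorFourier.norm_fourierIntegral_le_integral_norm _ _ _ _ _) (hL1 n)
  have hInt0 : ∀ n, 0 ≤ ∫ y : ℝ, ‖(u n : ℝ → ℂ) y‖ :=
    fun n => integral_nonneg fun y => norm_nonneg _
  have hglip : ∀ n x x', ‖g n x - g n x'‖ ≤ (2*π*lam*Mc) * |x - x'| := fun n x x' => by
    refine le_trans (lipschitz_inv hlam.le (hint n) (husupp n) x x') ?_
    have hpi := Real.pi_pos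
    have h1 := hL1 n; have h2 := hInt0 n; have h3 := abs_nonneg (x - x')
    have h4 : (0:ℝ) ≤ 2*π*lam := by positivity
    have h5 := mul_le_mul_of_nonneg_right (mul_le_mul_of_nonneg_left h1 h4) h3
    linarith
  obtain ⟨σ, hσ, hcau⟩ := exists_subseq_unif_cauchy (lam := lam) g
    (fun n => contInv (hint n)) hgbd hglip
  set w : ℕ → Lp ℂ 2 (volume : Measure ℝ) := fun k => Pproj lam (F (u (σ k))) with hw
  have hwdiff : ∀ k l, ((w k - w l : Lp ℂ 2 (volume : Measure ℝ)) : ℝ → ℂ) =ᵐ[volume]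
      (Ioo (-lam) lam).indicator (fun x => g (σ k) x - g (σ l) x) := by
    intro k l
    filter_upwards [Lp.coeFn_sub (w k) (w l), Pproj_coeFn (lam := lam) (F (u (σ k))),
      Pproj_coeFn (lam := lam) (F (u (σ l))), hFg (σ k), hFg (σ l)] with x h1 h2 h3 h4 h5
    rw [h1, Pi.sub_apply]
    show (w k : ℝ → ℂ) x - (w l : ℝ → ℂ) x = _
    rw [h2, h3, indicator_apply, indicator_apply, indicator_apply]
    by_cases hx : x ∈ Ioo (-lam) lam <;> simp [hx, h4, h5]
  have hwnorm : ∀ k l (ε : ℝ), 0 ≤ ε →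
      (∀ x ∈ Icc (-lam) lam, ‖g (σ k) x - g (σ l) x‖ ≤ ε) → ‖w k - w l‖ ≤ Mc * ε := by
    intro k l ε hε hx
    rw [Lp.norm_def, eLpNorm_congr_ae (hwdiff k l),
      eLpNorm_indicator_eq_eLpNorm_restrict measurableSet_Ioo]
    have hb : ∀ᵐ x ∂(volume.restrict (Ioo (-lam) lam)), ‖g (σ k) x - g (σ l) x‖ ≤ ε := by
      rw [ae_restrict_iff' measurableSet_Ioo]
      exact Filter.Eventually.of_forall fun x hxI => hx x (Ioo_subset_Icc_self hxI)
    have hlee := eLpNorm_le_of_ae_bound (p := (2 : ℝ≥0∞)) hb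
    rw [Measure.restrict_apply_univ] at hlee
    have h2r : ((2 : ℝ≥0∞).toReal)⁻¹ = (2⁻¹ : ℝ) := by norm_num
    rw [h2r] at hlee
    have hfin : (volume (Ioo (-lam) lam)) ^ (2⁻¹ : ℝ) * ENNReal.ofReal ε ≠ ⊤ :=
      (ENNReal.mul_lt_top (vI_lt_top lam) ENNReal.ofReal_lt_top).ne
    calc (eLpNorm (g (σ k) - g (σ l) : ℝ → ℂ) 2 (volume.restrict (Ioo (-lam) lam))).toReal
        ≤ ((volume (Ioo (-lam) lam)) ^ (2⁻¹ : ℝ) * ENNReal.ofReal ε).toReal := by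
          apply ENNReal.toReal_mono hfin
          exact hlee
      _ = Mc * ε := by rw [ENNReal.toReal_mul, ENNReal.toReal_ofReal hε]
  have hwCauchy : CauchySeq w := by
    rw [Metric.cauchySeq_iff]
    intro ε hε
    have hε'pos : 0 < ε / (2*(Mc+1)) := by positivity
    obtain ⟨N, hN⟩ := hcau (ε / (2*(Mc+1))) hε'pos
    refine ⟨N, fun k hk l hl => ?_⟩
    rw [dist_eq_norm]
    have hle3 := hwnorm k l _ hε'pos.le (fun x hx => hN k hk l hl x hx)
    have h2 : Mc * (ε / (2*(Mc+1))) ≤ (Mc+1) * (ε / (2*(Mc+1))) := by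
      apply mul_le_mul_of_nonneg_right (by linarith) hε'pos.le
    have h3 : (Mc+1) * (ε / (2*(Mc+1))) = ε/2 := by
      field_simp
    have : ‖w k - w l‖ ≤ ε/2 := by linarith
    linarith
  obtain ⟨v, hv⟩ := cauchySeq_tendsto_of_complete hwCauchy
  have hnw : Tendsto (fun k => ‖w k‖) atTop (nhds 1) := htend.comp hσ.tendsto_atTop
  have hvnorm : ‖v‖ = 1 := tendsto_nhds_unique hv.norm hnw
  have hdiff0 : Tendsto (fun k => F (u (σ k)) - w k) atTop (nhds 0) := by
    rw [tendsto_zero_iff_norm_tendsto_zero]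
    have hle2 : ∀ k, ‖F (u (σ k)) - w k‖ ≤ Real.sqrt (1 - ‖w k‖*‖w k‖) := by
      intro k
      have hpy := pythagoras (lam := lam) (F (u (σ k)))
      have hnf : ‖F (u (σ k))‖ ≤ 1 := by rw [F.norm_map]; exact hule _
      have hsq : ‖F (u (σ k)) - w k‖ * ‖F (u (σ k)) - w k‖ ≤ 1 - ‖w k‖*‖w k‖ := by
        nlinarith [norm_nonneg (F (u (σ k)))]
      have h0 : (0:ℝ) ≤ ‖F (u (σ k)) - w k‖ := norm_nonneg _
      rw [show ∀ y : ℝ, Real.sqrt y = Real.sqrt y from fun _ => rfl]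
      have := Real.sqrt_le_sqrt hsq
      calc ‖F (u (σ k)) - w k‖
          = Real.sqrt (‖F (u (σ k)) - w k‖ * ‖F (u (σ k)) - w k‖) := by
            rw [Real.sqrt_mul_self h0]
        _ ≤ Real.sqrt (1 - ‖w k‖*‖w k‖) := this
    apply squeeze_zero (fun k => norm_nonneg _) hle2
    have h1 : Tendsto (fun k => 1 - ‖w k‖*‖w k‖) atTop (nhds (1 - 1*1)) :=
      tendsto_const_nhds.sub (hnw.mul hnw)
    have h2 := (Real.continuous_sqrt.tendsto _).comp h1
    simpa [Function.comp_def] using h2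
  have hFconv : Tendsto (fun k => F (u (σ k))) atTop (nhds v) := by
    have := hv.add hdiff0
    simp only [add_zero] at this
    have heq : (fun k => w k + (F (u (σ k)) - w k)) = fun k => F (u (σ k)) := by
      funext k; abel
    rwa [heq] at this
  set uinf := F.symm v with huinf
  have huconv : Tendsto (fun k => u (σ k)) atTop (nhds uinf) := by
    have hcont := F.symm.continuous.tendsto v
    have := hcont.comp hFconv
    have heq : ((F.symm : Lp ℂ 2 (volume : Measure ℝ) → Lp ℂ 2 (volume : Measure ℝ))
        ∘ fun k => F (u (σ k))) = fun k => u (σ k) := by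
      funext k
      simp [LinearIsometryEquiv.symm_apply_apply]
    rwa [heq] at this
  have huinfnorm : ‖uinf‖ = 1 := by rw [huinf, LinearIsometryEquiv.norm_map]; exact hvnorm
  have hPuinf : Pproj lam uinf = uinf := by
    have h1 : Tendsto (fun k => Pproj lam (u (σ k))) atTop (nhds (Pproj lam uinf)) :=
      (Pproj_continuous.tendsto _).comp huconv
    have h2 : (fun k => Pproj lam (u (σ k))) = fun k => u (σ k) :=
      funext fun k => Pproj_self _ (husupp _)
    rw [h2] at h1
    exact tendsto_nhds_unique h1 huconv
  have hPv : Pproj lam v = v := by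
    have h1 : Tendsto (fun k => Pproj lam (w k)) atTop (nhds (Pproj lam v)) :=
      (Pproj_continuous.tendsto _).comp hv
    have h2 : (fun k => Pproj lam (w k)) = w := funext fun k => Pproj_idem _
    rw [h2] at h1
    exact tendsto_nhds_unique h1 hv
  have hsuppinf : ∀ᵐ x : ℝ, x ∉ Ioo (-lam) lam → (uinf : ℝ → ℂ) x = 0 := by
    have h5 := Pproj_coeFn (lam := lam) uinf
    rw [hPuinf] at h5
    filter_upwards [h5] with x hx hxI
    rw [hx, indicator_apply, if_neg hxI]
  have hsuppv : ∀ᵐ x : ℝ, x ∉ Ioo (-lam) lam → (v : ℝ → ℂ) x = 0 := by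
    have h5 := Pproj_coeFn (lam := lam) v
    rw [hPv] at h5
    filter_upwards [h5] with x hx hxI
    rw [hx, indicator_apply, if_neg hxI]
  have hintinf : Integrable (uinf : ℝ → ℂ) volume := (integrable_of_supported hsuppinf).1
  have hFginf : ((F uinf) : ℝ → ℂ) =ᵐ[volume] 𝓕⁻ ((uinf : ℝ → ℂ)) := by
    have := hF ((uinf : ℝ → ℂ)) hintinf (Lp.memLp uinf)
    rwa [Lp.toLp_coeFn] at this
  have hFuinf : F uinf = v := F.apply_symm_apply v
  rw [hFuinf] at hFginf
  have hzero : ∀ᵐ x : ℝ, x ∉ Ioo (-lam) lam → 𝓕⁻ ((uinf : ℝ → ℂ)) x = 0 := by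
    filter_upwards [hFginf, hsuppv] with x h1 h2 hxI
    rw [← h1]
    exact h2 hxI
  have hvanish := key_vanish hlam hintinf hsuppinf hzero
  have hv0 : ‖v‖ = 0 := by
    rw [Lp.norm_def,
      eLpNorm_congr_ae (hFginf.trans (Filter.Eventually.of_forall fun x => hvanish x))]
    simp
  rw [hvnorm] at hv0
  exact one_ne_zero hv0
end
end

section
/- Let λ > 0 and let f ∈ L²(ℝ) be even with ℱf = f. Let u be the unique even function in L²(ℝ) vanishing a.e. outside (−λ,λ) with u + F_λ u = P_λ f. Then the orthogonal projection of f onto the Sonine space K_λ equals f − u − ℱu. -/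
open MeasureTheory Complex Set FourierTransform
open scoped RealInnerProductSpace ComplexConjugate

noncomputable section

/-- The Sonine space `K_λ`: even `f ∈ L²(ℝ)` with `f = 0` a.e. on `(−λ,λ)` and
`ℱf = 0` a.e. on `(−λ,λ)`. -/
def Kset (lam : ℝ)
    (F : Lp ℂ 2 (volume : Measure ℝ) ≃ₗᵢ[ℂ] Lp ℂ 2 (volume : Measure ℝ)) :
    Set (Lp ℂ 2 (volume : Measure ℝ)) :=
  {g | (∀ᵐ x : ℝ, g (-x) = g x) ∧
       (∀ᵐ x : ℝ, x ∈ Ioo (-lam) lam → g x = 0) ∧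
       (∀ᵐ x : ℝ, x ∈ Ioo (-lam) lam → (F g) x = 0)}

/-- The operator `F_λ = P_λ ℱ P_λ`. -/
def Fop (lam : ℝ)
    (F : Lp ℂ 2 (volume : Measure ℝ) ≃ₗᵢ[ℂ] Lp ℂ 2 (volume : Measure ℝ))
    (f : Lp ℂ 2 (volume : Measure ℝ)) : Lp ℂ 2 (volume : Measure ℝ) :=
  Pproj lam (F (Pproj lam f))


private lemma ae_neg' {p : ℝ → Prop} (h : ∀ᵐ x : ℝ, p x) : ∀ᵐ x : ℝ, p (-x) :=
  ((Measure.measurePreserving_neg (volume : Measure ℝ)).quasiMeasurePreserving.tendsto_ae).eventually h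

private lemma finv_flip' {a b : ℝ → ℂ} (ha : Integrable a volume) (hb : Integrable b volume) :
    ∫ x, 𝓕⁻ a x * b x = ∫ x, a x * 𝓕⁻ b x := by
  have hL : Continuous fun p : ℝ × ℝ => (-(innerₗ ℝ)) p.1 p.2 := by
    exact (continuous_inner (𝕜 := ℝ) (E := ℝ)).neg
  have hflip : (-(innerₗ ℝ)).flip = -(innerₗ ℝ) := by
    ext x y
    simp [real_inner_comm]
  have key := VectorFourier.integral_fourierIntegral_smul_eq_flip (L := -(innerₗ ℝ))
      Real.continuous_fourierChar hL ha hb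
  rw [hflip] at key
  simpa [smul_eq_mul, FourierTransformInv.fourierInv] using key

private lemma conj_finv' (h : ℝ → ℂ) (x : ℝ) :
    (starRingEnd ℂ) (𝓕⁻ h x)
      = 𝓕 (fun y => (starRingEnd ℂ) (h y)) x := by
  rw [Real.fourierInv_eq', Real.fourier_eq', ← integral_conj]
  congr 1
  ext y
  simp only [smul_eq_mul, map_mul, ← Complex.exp_conj]
  congr 2
  simp [Complex.ext_iff]

private lemma finv_comp_neg' {v : ℝ → ℂ} (hve : ∀ᵐ x : ℝ, v (-x) = v x) (x : ℝ) :
    𝓕⁻ v (-x) = 𝓕⁻ v x := by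
  rw [Real.fourierInv_eq', Real.fourierInv_eq']
  have h1 : (∫ y : ℝ, Complex.exp (↑(2 * Real.pi * (inner ℝ y (-x) : ℝ)) * Complex.I) • v y)
      = ∫ y : ℝ, Complex.exp (↑(2 * Real.pi * (inner ℝ y x : ℝ)) * Complex.I) • v (-y) := by
    rw [← MeasureTheory.integral_neg_eq_self
      (fun y : ℝ => Complex.exp (↑(2 * Real.pi * (inner ℝ y x : ℝ)) * Complex.I) • v (-y)) volume]
    congr 1
    ext y
    simp [real_inner_comm, mul_comm, mul_neg, neg_neg]
  rw [h1]
  exact integral_congr_ae (hve.mono fun y hy => by dsimp only; rw [hy])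

private lemma mult_key' {g v : ℝ → ℂ} (hg : Integrable g volume) (hv : Integrable v volume)
    (hve : ∀ᵐ x : ℝ, v (-x) = v x) :
    ∫ x, (starRingEnd ℂ) (g x) * 𝓕⁻ v x
      = ∫ x, (starRingEnd ℂ) (𝓕⁻ g x) * v x := by
  have hgc : Integrable (fun x => (starRingEnd ℂ) (g x)) volume := by
    refine ⟨Complex.continuous_conj.comp_aestronglyMeasurable hg.1, ?_⟩
    simpa [HasFiniteIntegral] using hg.2
  calc ∫ x, (starRingEnd ℂ) (g x) * 𝓕⁻ v x
      = ∫ x, 𝓕⁻ v x * (starRingEnd ℂ) (g x) := by simp_rw [mul_comm]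
    _ = ∫ x, v x * 𝓕⁻ (fun y => (starRingEnd ℂ) (g y)) x :=
        finv_flip' hv hgc
    _ = ∫ x, v x * 𝓕 (fun y => (starRingEnd ℂ) (g y)) x := by
        simp_rw [Real.fourierInv_eq_fourier_neg]
        have h2 : (∫ x, v x * 𝓕 (fun y => (starRingEnd ℂ) (g y)) (-x))
            = ∫ x, v (-x) * 𝓕 (fun y => (starRingEnd ℂ) (g y)) x := by
          rw [← MeasureTheory.integral_neg_eq_self
            (fun x => v (-x) * 𝓕 (fun y => (starRingEnd ℂ) (g y)) x) volume]
          simp [neg_neg]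
        rw [h2]
        exact integral_congr_ae (hve.mono fun y hy => by dsimp only; rw [hy])
    _ = ∫ x, (starRingEnd ℂ) (𝓕⁻ g x) * v x := by
        simp_rw [conj_finv', mul_comm]

private lemma symm_eq_of_even
    (F : Lp ℂ 2 (volume : Measure ℝ) ≃ₗᵢ[ℂ] Lp ℂ 2 (volume : Measure ℝ))
    (hF : IsFourierPlancherel F) (u : Lp ℂ 2 (volume : Measure ℝ))
    (hue : ∀ᵐ x : ℝ, u (-x) = u x) (hui : Integrable (u : ℝ → ℂ) volume) :
    F.symm u = F u := by
  have hFu : (F u : ℝ → ℂ) =ᵐ[volume] 𝓕⁻ (u : ℝ → ℂ) := by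
    have := hF (u : ℝ → ℂ) hui (Lp.memLp u)
    rwa [Lp.toLp_coeFn] at this
  obtain ⟨c, hc⟩ : ∃ c, c = F u - F.symm u := ⟨_, rfl⟩
  have hkey : ∀ (g : ℝ → ℂ) (hg2 : MemLp g 2 volume), Integrable g volume →
      (inner ℂ (hg2.toLp g) c : ℂ) = 0 := by
    intro g hg2 hg1
    have hFw : (F (hg2.toLp g) : ℝ → ℂ) =ᵐ[volume] 𝓕⁻ g := hF g hg1 hg2
    have e1 : (inner ℂ (hg2.toLp g) (F u) : ℂ)
        = ∫ x, conj (g x) * 𝓕⁻ (u : ℝ → ℂ) x := by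
      rw [L2.inner_def]
      apply integral_congr_ae
      filter_upwards [hg2.coeFn_toLp, hFu] with x h1 h2
      simp [RCLike.inner_apply, h1, h2, mul_comm]
    have e2 : (inner ℂ (hg2.toLp g) (F.symm u) : ℂ)
        = ∫ x, conj (𝓕⁻ g x) * (u : ℝ → ℂ) x := by
      have h3 := F.inner_map_map (hg2.toLp g) (F.symm u)
      rw [F.apply_symm_apply] at h3
      rw [← h3, L2.inner_def]
      apply integral_congr_ae
      filter_upwards [hFw] with x h1
      simp [RCLike.inner_apply, h1, mul_comm]
    rw [hc, inner_sub_right, e1, e2, mult_key' hg1 hui hue, sub_self]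
  have hlen : ∀ δ : ℝ, 0 < δ → ‖c‖ ≤ δ := by
    intro δ hδ
    obtain ⟨g, gsupp, hgs, gcont, gmem⟩ :=
      (Lp.memLp c).exists_hasCompactSupport_eLpNorm_sub_le
        ENNReal.ofNat_ne_top (ε := ENNReal.ofReal δ) (ENNReal.ofReal_pos.2 hδ).ne'
    set w := gmem.toLp g with hw
    have h0 : (inner ℂ w c : ℂ) = 0 :=
      hkey g gmem (gcont.integrable_of_hasCompactSupport gsupp)
    have hcw : ‖c - w‖ ≤ δ := by
      rw [Lp.norm_def]
      have he : eLpNorm (↑(c - w) : ℝ → ℂ) 2 volume = eLpNorm ((c : ℝ → ℂ) - g) 2 volume := by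
        apply eLpNorm_congr_ae
        filter_upwards [Lp.coeFn_sub c w, gmem.coeFn_toLp] with x h1 h2
        rw [h1, Pi.sub_apply, h2, Pi.sub_apply]
      rw [he]
      exact ENNReal.toReal_le_of_le_ofReal hδ.le hgs
    have h1 : ‖c‖ * ‖c‖ ≤ δ * ‖c‖ := by
      have hnn : ‖c‖ * ‖c‖ = RCLike.re (inner ℂ c c : ℂ) :=
        (inner_self_eq_norm_mul_norm (𝕜 := ℂ) c).symm
      rw [hnn]
      have hinner : (inner ℂ c c : ℂ) = inner ℂ (c - w) c := by
        rw [inner_sub_left, h0, sub_zero]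
      calc RCLike.re (inner ℂ c c : ℂ) = RCLike.re (inner ℂ (c - w) c : ℂ) := by rw [hinner]
        _ ≤ ‖(inner ℂ (c - w) c : ℂ)‖ := RCLike.re_le_norm _
        _ ≤ ‖c - w‖ * ‖c‖ := norm_inner_le_norm _ _
        _ ≤ δ * ‖c‖ := mul_le_mul_of_nonneg_right hcw (norm_nonneg _)
    nlinarith [norm_nonneg c]
  have hc0 : c = 0 := by
    have h : ‖c‖ ≤ 0 := le_of_forall_pos_le_add fun δ hδ => by simpa using hlen δ hδ
    exact norm_le_zero_iff.1 h
  rw [hc] at hc0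
  exact (sub_eq_zero.1 hc0).symm

private lemma Pproj_coe' (lam : ℝ) (h : Lp ℂ 2 (volume : Measure ℝ)) :
    (Pproj lam h : ℝ → ℂ) =ᵐ[volume] (Ioo (-lam) lam).indicator (h : ℝ → ℂ) :=
  MemLp.coeFn_toLp _

private lemma inner_zero_of_disjoint' {lam : ℝ} (a b : Lp ℂ 2 (volume : Measure ℝ))
    (ha : ∀ᵐ x : ℝ, x ∉ Ioo (-lam) lam → a x = 0)
    (hb : ∀ᵐ x : ℝ, x ∈ Ioo (-lam) lam → b x = 0) :
    (inner ℂ a b : ℂ) = 0 := by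
  rw [L2.inner_def, ← integral_zero ℝ ℂ]
  apply integral_congr_ae
  filter_upwards [ha, hb] with x hx1 hx2
  by_cases h : x ∈ Ioo (-lam) lam
  · simp [RCLike.inner_apply, hx2 h]
  · simp [RCLike.inner_apply, hx1 h]

/-- If `f ∈ L²(ℝ)` is even with `ℱf = f`, and `u + F_λ u = P_λ f`, then the orthogonal
projection of `f` onto the Sonine space `K_λ` equals `f − u − ℱu`. -/
theorem projection_onto_sonine_of_selfdual (lam : ℝ) (hlam : 0 < lam)
    (F : Lp ℂ 2 (volume : Measure ℝ) ≃ₗᵢ[ℂ] Lp ℂ 2 (volume : Measure ℝ))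
    (hF : IsFourierPlancherel F)
    (f u : Lp ℂ 2 (volume : Measure ℝ))
    (heven : ∀ᵐ x : ℝ, f (-x) = f x)
    (hself : F f = f)
    (hue : ∀ᵐ x : ℝ, u (-x) = u x) (hus : ∀ᵐ x : ℝ, x ∉ Ioo (-lam) lam → u x = 0)
    (hu : u + Fop lam F u = Pproj lam f) :
    (f - u - F u) ∈ Kset lam F ∧
    ∀ g ∈ Kset lam F, inner (𝕜 := ℂ) (f - (f - u - F u)) g = (0 : ℂ) := by
  -- integrability of u
  have hui : Integrable (u : ℝ → ℂ) volume := by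
    have h1 : (u : ℝ → ℂ) =ᵐ[volume] (Ioo (-lam) lam).indicator (u : ℝ → ℂ) := by
      filter_upwards [hus] with x hx
      by_cases h : x ∈ Ioo (-lam) lam
      · rw [indicator_of_mem h]
      · rw [indicator_of_notMem h, hx h]
    have h2 : MemLp ((Ioo (-lam) lam).indicator (u : ℝ → ℂ)) 2 volume :=
      (Lp.memLp u).indicator measurableSet_Ioo
    have h3 : MemLp ((Ioo (-lam) lam).indicator (u : ℝ → ℂ)) 1 volume :=
      h2.mono_exponent_of_measure_support_ne_top
        (fun x hx => indicator_of_notMem hx _) (by simp [Real.volume_Ioo]) (by norm_num)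
    exact (memLp_one_iff_integrable.1 h3).congr h1.symm
  have hsymm : F.symm u = F u := symm_eq_of_even F hF u hue hui
  have hFFu : F (F u) = u := by rw [← hsymm, F.apply_symm_apply]
  have hFu : (F u : ℝ → ℂ) =ᵐ[volume] 𝓕⁻ (u : ℝ → ℂ) := by
    have := hF (u : ℝ → ℂ) hui (Lp.memLp u)
    rwa [Lp.toLp_coeFn] at this
  -- Pproj fixes u
  have hPu : Pproj lam u = u := by
    apply Lp.ext
    filter_upwards [Pproj_coe' lam u, hus] with x h1 hx
    rw [h1]
    by_cases h : x ∈ Ioo (-lam) lam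
    · rw [indicator_of_mem h]
    · rw [indicator_of_notMem h, hx h]
  have hu' : u + Pproj lam (F u) = Pproj lam f := by
    rw [Fop, hPu] at hu; exact hu
  -- coercion of v
  have hvcoe : ((f - u - F u : Lp ℂ 2 (volume : Measure ℝ)) : ℝ → ℂ) =ᵐ[volume]
      fun x => (f : ℝ → ℂ) x - (u : ℝ → ℂ) x - (F u : ℝ → ℂ) x := by
    filter_upwards [Lp.coeFn_sub (f - u) (F u), Lp.coeFn_sub f u] with x h1 h2
    rw [h1, Pi.sub_apply, h2, Pi.sub_apply]
  -- v vanishes a.e. on the interval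
  have hzero : ∀ᵐ x : ℝ, x ∈ Ioo (-lam) lam →
      ((f - u - F u : Lp ℂ 2 (volume : Measure ℝ)) : ℝ → ℂ) x = 0 := by
    have hiden : ((u + Pproj lam (F u) : Lp ℂ 2 (volume : Measure ℝ)) : ℝ → ℂ)
        =ᵐ[volume] ((Pproj lam f : Lp ℂ 2 (volume : Measure ℝ)) : ℝ → ℂ) := by
      rw [hu']
    filter_upwards [hvcoe, hiden, Lp.coeFn_add u (Pproj lam (F u)),
      Pproj_coe' lam (F u), Pproj_coe' lam f] with x e1 e2 e3 e4 e5 hx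
    rw [e1]
    have : (u : ℝ → ℂ) x + (F u : ℝ → ℂ) x = (f : ℝ → ℂ) x := by
      have := e2
      rw [e3] at this
      have h6 : (u : ℝ → ℂ) x + (Pproj lam (F u) : ℝ → ℂ) x = (Pproj lam f : ℝ → ℂ) x := this
      rwa [e4, e5, indicator_of_mem hx, indicator_of_mem hx] at h6
    rw [← this]; ring
  -- evenness of F u
  have hFue : ∀ᵐ x : ℝ, (F u : ℝ → ℂ) (-x) = (F u : ℝ → ℂ) x := by
    have h2 : ∀ᵐ x : ℝ, (F u : ℝ → ℂ) (-x) = 𝓕⁻ (u : ℝ → ℂ) (-x) :=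
      ae_neg' (p := fun y => (F u : ℝ → ℂ) y = 𝓕⁻ (u : ℝ → ℂ) y) hFu
    filter_upwards [hFu, h2] with x e1 e2
    rw [e2, finv_comp_neg' hue x, ← e1]
  -- evenness of v
  have hveven : ∀ᵐ x : ℝ, ((f - u - F u : Lp ℂ 2 (volume : Measure ℝ)) : ℝ → ℂ) (-x)
      = ((f - u - F u : Lp ℂ 2 (volume : Measure ℝ)) : ℝ → ℂ) x := by
    have h2 : ∀ᵐ x : ℝ, ((f - u - F u : Lp ℂ 2 (volume : Measure ℝ)) : ℝ → ℂ) (-x)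
        = (f : ℝ → ℂ) (-x) - (u : ℝ → ℂ) (-x) - (F u : ℝ → ℂ) (-x) :=
      ae_neg' (p := fun y => ((f - u - F u : Lp ℂ 2 (volume : Measure ℝ)) : ℝ → ℂ) y
        = (f : ℝ → ℂ) y - (u : ℝ → ℂ) y - (F u : ℝ → ℂ) y) hvcoe
    filter_upwards [hvcoe, h2, heven, hue, hFue] with x e1 e2 e3 e4 e5
    rw [e1, e2, e3, e4, e5]
  -- F fixes v
  have hFv : F (f - u - F u) = f - u - F u := by
    have h1 : F (f - u - F u) = F f - F u - F (F u) := by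
      rw [map_sub, map_sub]
    rw [h1, hself, hFFu]
    abel
  refine ⟨⟨hveven, hzero, ?_⟩, ?_⟩
  · rw [hFv]; exact hzero
  · intro g hg
    obtain ⟨hge, hgs, hgF⟩ := hg
    have hsub : f - (f - u - F u) = u + F u := by abel
    rw [hsub, inner_add_left]
    have h1 : (inner ℂ u g : ℂ) = 0 := inner_zero_of_disjoint' u g hus hgs
    have h2 : (inner ℂ (F u) g : ℂ) = 0 := by
      have h3 := F.inner_map_map (F.symm u) g
      rw [F.apply_symm_apply] at h3
      have h4 : (inner ℂ (F u) g : ℂ) = inner ℂ u (F g) := by rw [← hsymm, ← h3]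
      rw [h4]
      exact inner_zero_of_disjoint' u (F g) hus hgF
    rw [h1, h2, add_zero]
end
end

section
/- Let λ > 0 and ε ∈ {+1,−1}. There exists an entire function Φ : ℂ → ℂ such that Φ(x) = ψ_ε(x) for every real x, and Φ(t) = g_ε(t) for a.e. t ∈ (−λ,λ); that is, ψ_ε is the (unique) entire function whose restriction to (−λ,λ) coincides with g_ε = (1 + εF_λ)^{−1}(1_{(−λ,λ)}·2cos(2πλ·)). -/
open MeasureTheory Complex Set FourierTransform
set_option maxHeartbeats 1000000

noncomputable section

/-- `ψ_ε(x) = 2cos(2πλx) − ε·2∫₀^λ cos(2πxt) g_ε(t) dt`. -/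
def psiFun (lam ε : ℝ) (g : Lp ℂ 2 (volume : Measure ℝ)) : ℝ → ℂ := fun x =>
  2 * Real.cos (2 * Real.pi * lam * x) -
    (ε : ℂ) * 2 * ∫ t in (0:ℝ)..lam, (Real.cos (2 * Real.pi * x * t) : ℂ) * g t

namespace PsiAux

open Real

lemma norm_csin_le (z : ℂ) : ‖Complex.sin z‖ ≤ Real.exp ‖z‖ := by
  rw [Complex.sin]
  calc ‖(Complex.exp (-z * I) - Complex.exp (z * I)) * I / 2‖
      = ‖Complex.exp (-z * I) - Complex.exp (z * I)‖ / 2 := by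
        simp [norm_div, norm_mul]
    _ ≤ (‖Complex.exp (-z * I)‖ + ‖Complex.exp (z * I)‖) / 2 := by
        gcongr; exact norm_sub_le _ _
    _ ≤ (Real.exp ‖z‖ + Real.exp ‖z‖) / 2 := by
        gcongr
        · rw [Complex.norm_exp, Real.exp_le_exp]
          refine (Complex.re_le_norm _).trans ?_
          simp [map_mul]
        · rw [Complex.norm_exp, Real.exp_le_exp]
          refine (Complex.re_le_norm _).trans ?_
          simp [map_mul]
    _ = Real.exp ‖z‖ := by ring

lemma norm_ccos_le' (z : ℂ) : ‖Complex.cos z‖ ≤ Real.exp ‖z‖ := by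
  rw [Complex.cos]
  calc ‖(Complex.exp (z * I) + Complex.exp (-z * I)) / 2‖
      ≤ (‖Complex.exp (z * I)‖ + ‖Complex.exp (-z * I)‖) / 2 := by
        rw [norm_div, Complex.norm_ofNat]
        gcongr
        exact norm_add_le _ _
    _ ≤ (Real.exp ‖z‖ + Real.exp ‖z‖) / 2 := by
        gcongr
        · rw [Complex.norm_exp, Real.exp_le_exp]
          exact (Complex.re_le_norm _).trans (by simp [map_mul])
        · rw [Complex.norm_exp, Real.exp_le_exp]
          exact (Complex.re_le_norm _).trans (by simp [map_mul])
    _ = Real.exp ‖z‖ := by ring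

lemma norm_arg_eq (z : ℂ) (t : ℝ) : ‖2 * (π:ℂ) * z * (t:ℂ)‖ = 2 * π * ‖z‖ * |t| := by
  rw [norm_mul, norm_mul, norm_mul, Complex.norm_ofNat, Complex.norm_real,
    Complex.norm_real, Real.norm_eq_abs, Real.norm_eq_abs, abs_of_pos Real.pi_pos]

lemma norm_arg_le (z : ℂ) (t lam R : ℝ) (ht : t ∈ Set.Ioc 0 lam) (hz : ‖z‖ ≤ R)
    (hR : 0 ≤ R) : ‖2 * (π:ℂ) * z * (t:ℂ)‖ ≤ 2 * π * R * lam := by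
  rw [norm_arg_eq]
  have h1 : |t| ≤ lam := by rw [abs_of_pos ht.1]; exact ht.2
  have h2 : (0:ℝ) < π := Real.pi_pos
  calc 2 * π * ‖z‖ * |t| ≤ 2 * π * R * |t| := by
        refine mul_le_mul_of_nonneg_right ?_ (abs_nonneg t)
        nlinarith
    _ ≤ 2 * π * R * lam := mul_le_mul_of_nonneg_left h1 (by positivity)

lemma entire_aux (lam : ℝ) (hlam : 0 ≤ lam) (g : ℝ → ℂ)
    (hgi : IntegrableOn g (Set.Ioc 0 lam) volume) :
    Differentiable ℂ (fun z : ℂ => ∫ t in (0:ℝ)..lam, Complex.cos (2 * π * z * t) * g t) := by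
  have hrw : (fun z : ℂ => ∫ t in (0:ℝ)..lam, Complex.cos (2 * π * z * t) * g t)
      = fun z : ℂ => ∫ t, Complex.cos (2 * π * z * t) * g t
          ∂(volume.restrict (Set.Ioc 0 lam)) := by
    funext z
    rw [intervalIntegral.integral_of_le hlam]
  rw [hrw]
  intro z₀
  set μ := volume.restrict (Set.Ioc (0:ℝ) lam) with hμ
  set C : ℝ := 2 * π * lam * Real.exp (2 * π * (‖z₀‖ + 1) * lam) with hC
  have key := hasDerivAt_integral_of_dominated_loc_of_deriv_le (μ := μ)
    (F := fun (z : ℂ) (t : ℝ) => Complex.cos (2 * π * z * t) * g t)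
    (F' := fun (z : ℂ) (t : ℝ) =>
      (-Complex.sin (2 * π * z * t) * (2 * π * t)) * g t)
    (x₀ := z₀) (bound := fun t => C * ‖g t‖) (s := Metric.ball z₀ 1) (Metric.ball_mem_nhds z₀ one_pos)
    ?_ ?_ ?_ ?_ ?_ ?_
  · exact key.2.differentiableAt
  · filter_upwards with z
    exact ((Complex.continuous_cos.comp (by continuity)).aestronglyMeasurable).mul
      hgi.aestronglyMeasurable
  · refine Integrable.mono' (g := fun t => Real.exp (2 * π * (‖z₀‖ + 1) * lam) * ‖g t‖)
      (hgi.norm.const_mul _)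
      (((Complex.continuous_cos.comp (by continuity)).aestronglyMeasurable).mul
        hgi.aestronglyMeasurable) ?_
    filter_upwards [ae_restrict_mem measurableSet_Ioc] with t ht
    rw [norm_mul]
    refine mul_le_mul_of_nonneg_right ?_ (norm_nonneg _)
    refine (norm_ccos_le' _).trans ?_
    rw [Real.exp_le_exp]
    exact norm_arg_le z₀ t lam _ ht (by linarith [norm_nonneg z₀]) (by positivity)
  · exact (((Complex.continuous_sin.comp (by continuity)).neg.mul
      (by continuity)).aestronglyMeasurable).mul hgi.aestronglyMeasurable
  · filter_upwards [ae_restrict_mem measurableSet_Ioc] with t ht z hz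
    rw [norm_mul, norm_mul, norm_neg]
    have hzR : ‖z‖ ≤ ‖z₀‖ + 1 := by
      have h := mem_ball_iff_norm.mp hz
      calc ‖z‖ ≤ ‖z₀‖ + ‖z - z₀‖ := by simpa using norm_add_le z₀ (z - z₀)
        _ ≤ ‖z₀‖ + 1 := by linarith
    have h1 : ‖Complex.sin (2 * π * z * t)‖ ≤ Real.exp (2 * π * (‖z₀‖ + 1) * lam) := by
      refine (norm_csin_le _).trans ?_
      rw [Real.exp_le_exp]
      exact norm_arg_le z t lam _ ht hzR (by positivity)
    have h2 : ‖(2 * (π:ℂ) * (t:ℂ))‖ ≤ 2 * π * lam := by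
      have := norm_arg_le 1 t lam 1 ht (by simp) zero_le_one
      simpa [mul_comm, mul_assoc, mul_left_comm] using this
    calc ‖Complex.sin (2 * π * z * t)‖ * ‖(2 * (π:ℂ) * (t:ℂ))‖ * ‖g t‖
        ≤ Real.exp (2 * π * (‖z₀‖ + 1) * lam) * (2 * π * lam) * ‖g t‖ := by
          refine mul_le_mul_of_nonneg_right ?_ (norm_nonneg _)
          exact mul_le_mul h1 h2 (norm_nonneg _) (Real.exp_pos _).le
      _ = C * ‖g t‖ := by rw [hC]; ring
  · exact (hgi.norm.const_mul C)
  · filter_upwards with t z _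
    have h1 : HasDerivAt (fun z : ℂ => 2 * π * z * t) (2 * π * t) z := by
      simpa using ((hasDerivAt_id z).const_mul (2 * (π:ℂ))).mul_const (t:ℂ)
    exact ((Complex.hasDerivAt_cos _).comp z h1).mul_const (g t)

lemma hker_aux (g : ℝ → ℂ)
    (hInt : ∀ a b : ℝ, IntegrableOn g (Set.Ioc a b) volume)
    (e : ℝ → ℂ) (he : ∀ v, ‖e v‖ = 1) (hec : Continuous e) (a b : ℝ) :
    IntervalIntegrable (fun v : ℝ => e v * g v) volume a b := by
  rw [intervalIntegrable_iff]
  exact Integrable.bdd_mul ((hInt (min a b) (max a b)).mono_set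
      (by rw [Set.uIoc]))
    hec.aestronglyMeasurable.restrict (ae_of_all _ fun v => le_of_eq (he v))

lemma fourier_eval (lam : ℝ) (hlam : 0 < lam) (g : ℝ → ℂ)
    (hInt : ∀ a b : ℝ, IntegrableOn g (Set.Ioc a b) volume)
    (hge : ∀ᵐ x : ℝ, g (-x) = g x) (t : ℝ) :
    𝓕⁻ ((Set.Ioo (-lam) lam).indicator g) t
      = 2 * ∫ s in (0:ℝ)..lam, Complex.cos (2 * ↑π * (t:ℂ) * (s:ℂ)) * g s := by
  have hexp_norm : ∀ r : ℝ, ‖Complex.exp (↑r * I)‖ = 1 := fun r => by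
    exact Complex.norm_exp_ofReal_mul_I r
  have step1 : 𝓕⁻ ((Set.Ioo (-lam) lam).indicator g) t
      = ∫ v in Set.Ioo (-lam) lam, Complex.exp (↑(2 * π * t * v) * I) * g v := by
    rw [Real.fourierInv_eq_fourier_neg,
      Real.fourier_real_eq_integral_exp_smul]
    rw [← integral_indicator measurableSet_Ioo]
    congr 1
    funext v
    rw [smul_eq_mul, Set.indicator_mul_right]
    congr 3
    ring_nf
  rw [step1]
  rw [← integral_Ioc_eq_integral_Ioo,
    ← intervalIntegral.integral_of_le (by linarith : -lam ≤ lam)]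
  have hsplit := intervalIntegral.integral_add_adjacent_intervals
    (hker_aux g hInt (fun v => Complex.exp (↑(2 * π * t * v) * I))
      (fun v => hexp_norm (2 * π * t * v)) (Complex.continuous_exp.comp
      ((Complex.continuous_ofReal.comp (continuous_const.mul continuous_id)).mul
        continuous_const)) (-lam) 0)
    (hker_aux g hInt (fun v => Complex.exp (↑(2 * π * t * v) * I))
      (fun v => hexp_norm (2 * π * t * v)) (Complex.continuous_exp.comp
      ((Complex.continuous_ofReal.comp (continuous_const.mul continuous_id)).mul
        continuous_const)) 0 lam)
  rw [← hsplit]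
  have hneg : (∫ v in (-lam)..(0:ℝ), Complex.exp (↑(2 * π * t * v) * I) * g v)
      = ∫ v in (0:ℝ)..lam, Complex.exp (-(↑(2 * π * t * v)) * I) * g v := by
    have h2 := intervalIntegral.integral_comp_neg
      (fun v => Complex.exp (↑(2 * π * t * v) * I) * g v) (a := 0) (b := lam)
    rw [neg_zero] at h2
    rw [← h2]
    apply intervalIntegral.integral_congr_ae
    filter_upwards [hge] with v hv _
    rw [hv]
    congr 2
    push_cast
    ring
  rw [hneg, ← intervalIntegral.integral_add
    (hker_aux g hInt (fun v => Complex.exp (-(↑(2 * π * t * v)) * I))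
      (fun v => by
        show ‖cexp (-↑(2 * π * t * v) * I)‖ = 1
        rw [← Complex.ofReal_neg]; exact hexp_norm (-(2 * π * t * v)))
      (Complex.continuous_exp.comp
        (((Complex.continuous_ofReal.comp (continuous_const.mul continuous_id)).neg).mul
          continuous_const)) 0 lam)
    (hker_aux g hInt (fun v => Complex.exp (↑(2 * π * t * v) * I))
      (fun v => hexp_norm (2 * π * t * v)) (Complex.continuous_exp.comp
      ((Complex.continuous_ofReal.comp (continuous_const.mul continuous_id)).mul
        continuous_const)) 0 lam)]
  rw [← intervalIntegral.integral_const_mul]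
  apply intervalIntegral.integral_congr
  intro s _
  show cexp (-↑(2 * π * t * s) * I) * g s + cexp (↑(2 * π * t * s) * I) * g s
      = 2 * (Complex.cos (2 * ↑π * ↑t * ↑s) * g s)
  rw [show 2 * (π:ℂ) * (t:ℂ) * (s:ℂ) = ((2 * π * t * s : ℝ) : ℂ) by push_cast; ring,
    Complex.cos]
  ring

end PsiAux

open Real PsiAux in
/-- `ψ_ε` extends to the unique entire function whose restriction to `(−λ,λ)`
coincides (a.e.) with `g_ε = (1 + εF_λ)^{−1}(1_{(−λ,λ)}·2cos(2πλ·))`. -/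
theorem psi_entire_extension (lam : ℝ) (hlam : 0 < lam)
    (F : Lp ℂ 2 (volume : Measure ℝ) ≃ₗᵢ[ℂ] Lp ℂ 2 (volume : Measure ℝ))
    (hF : IsFourierPlancherel F)
    (ε : ℝ) (hε : ε = 1 ∨ ε = -1)
    (g : Lp ℂ 2 (volume : Measure ℝ))
    (hge : ∀ᵐ x : ℝ, g (-x) = g x)
    (hgs : ∀ᵐ x : ℝ, x ∉ Ioo (-lam) lam → g x = 0)
    (hg : ∀ᵐ t : ℝ, g t + (ε : ℂ) * (Fop lam F g) t =
      Set.indicator (Ioo (-lam) lam)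
        (fun s : ℝ => (2 * Real.cos (2 * Real.pi * lam * s) : ℂ)) t) :
    ∃ Φ : ℂ → ℂ, Differentiable ℂ Φ ∧
      (∀ x : ℝ, Φ x = psiFun lam ε g x) ∧
      (∀ᵐ t : ℝ, t ∈ Ioo (-lam) lam → Φ t = g t) ∧
      ∀ Ψ : ℂ → ℂ, Differentiable ℂ Ψ →
        (∀ᵐ t : ℝ, t ∈ Ioo (-lam) lam → Ψ t = g t) → Ψ = Φ := by
  classical
  -- integrability of `g` on bounded intervals
  have hInt : ∀ a b : ℝ, IntegrableOn (⇑g) (Set.Ioc a b) volume := by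
    intro a b
    haveI : Fact (volume (Set.Ioc a b) < ⊤) := ⟨measure_Ioc_lt_top⟩
    exact ((Lp.memLp g).restrict _).integrable one_le_two
  set f : ℝ → ℂ := (Set.Ioo (-lam) lam).indicator ⇑g with hfdef
  have hf2 : MemLp f 2 volume := (Lp.memLp g).indicator measurableSet_Ioo
  have hfi : Integrable f volume := by
    rw [hfdef, integrable_indicator_iff measurableSet_Ioo]
    exact (hInt (-lam) lam).mono_set Set.Ioo_subset_Ioc_self
  have hFg : ⇑(F (Pproj lam g)) =ᵐ[volume] (𝓕⁻ f : ℝ → ℂ) :=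
    hF f hfi hf2
  have hFopc : ⇑(Fop lam F g) =ᵐ[volume]
      (Set.Ioo (-lam) lam).indicator (⇑(F (Pproj lam g))) :=
    by unfold Fop; conv_lhs => rw [Pproj]
       exact MemLp.coeFn_toLp _
  have hFop2 : ∀ᵐ t : ℝ, t ∈ Ioo (-lam) lam → (Fop lam F g : ℝ → ℂ) t
      = 2 * ∫ s in (0:ℝ)..lam, Complex.cos (2 * ↑π * (t:ℂ) * (s:ℂ)) * g s := by
    filter_upwards [hFopc, hFg] with t h1 h2 hmem
    rw [h1, Set.indicator_of_mem hmem, h2]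
    exact fourier_eval lam hlam (⇑g) hInt hge t
  -- the entire extension
  refine ⟨fun z => 2 * Complex.cos (2 * ↑π * ↑lam * z) -
      (ε : ℂ) * 2 * ∫ s in (0:ℝ)..lam, Complex.cos (2 * ↑π * z * ↑s) * g s,
    ?_, ?_, ?_, ?_⟩
  · -- differentiability
    have hd1 : Differentiable ℂ fun z : ℂ => Complex.cos (2 * ↑π * ↑lam * z) :=
      Complex.differentiable_cos.comp (differentiable_id.const_mul _)
    have hd2 := entire_aux lam hlam.le (⇑g) (hInt 0 lam)
    exact (hd1.const_mul 2).sub (hd2.const_mul ((ε : ℂ) * 2))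
  · -- agreement with psiFun on ℝ
    intro x
    show 2 * Complex.cos (2 * ↑π * ↑lam * ↑x) -
        (ε : ℂ) * 2 * (∫ s in (0:ℝ)..lam, Complex.cos (2 * ↑π * ↑x * ↑s) * g s)
      = psiFun lam ε g x
    have hcos : ((Real.cos (2 * π * lam * x) : ℝ) : ℂ) = Complex.cos (2 * ↑π * ↑lam * ↑x) := by
      rw [Complex.ofReal_cos]
      norm_cast
    have hint : (∫ s in (0:ℝ)..lam, ((Real.cos (2 * π * x * s) : ℝ) : ℂ) * g s)
        = ∫ s in (0:ℝ)..lam, Complex.cos (2 * ↑π * ↑x * ↑s) * g s := by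
      apply intervalIntegral.integral_congr
      intro s _
      show ((Real.cos (2 * π * x * s) : ℝ) : ℂ) * g s = Complex.cos (2 * ↑π * ↑x * ↑s) * g s
      rw [Complex.ofReal_cos,
        show ((2 * π * x * s : ℝ) : ℂ) = 2 * (π:ℂ) * ↑x * ↑s by push_cast; ring]
    rw [psiFun, hcos, hint]
  · -- agreement with g on (-lam, lam)
    filter_upwards [hg, hFop2] with t h1 h2 hmem
    rw [Set.indicator_of_mem hmem] at h1
    show 2 * Complex.cos (2 * ↑π * ↑lam * ↑t) -
        (ε : ℂ) * 2 * (∫ s in (0:ℝ)..lam, Complex.cos (2 * ↑π * (t:ℂ) * ↑s) * g s)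
      = (g : ℝ → ℂ) t
    rw [show Complex.cos (2 * ↑π * ↑lam * ↑t) = ((Real.cos (2 * π * lam * t) : ℝ) : ℂ) by
      rw [Complex.ofReal_cos]; norm_cast]
    linear_combination -h1 + (ε : ℂ) * h2 hmem
  · -- uniqueness
    intro Ψ hΨd hΨae
    -- a.e. agreement of Ψ with the extension on the interval
    have hΦae : ∀ᵐ t : ℝ, t ∈ Ioo (-lam) lam →
        Ψ ↑t = 2 * Complex.cos (2 * ↑π * ↑lam * ↑t) -
          (ε : ℂ) * 2 * ∫ s in (0:ℝ)..lam, Complex.cos (2 * ↑π * (t:ℂ) * ↑s) * g s := by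
      filter_upwards [hΨae, hg, hFop2] with t h0 h1 h2 hmem
      rw [Set.indicator_of_mem hmem] at h1
      rw [h0 hmem, show Complex.cos (2 * ↑π * ↑lam * ↑t) = ((Real.cos (2 * π * lam * t) : ℝ) : ℂ) by
        rw [Complex.ofReal_cos]; norm_cast]
      linear_combination h1 - (ε : ℂ) * h2 hmem
    -- frequently equal near 0
    have hfreq : ∃ᶠ z in nhdsWithin (0:ℂ) {(0:ℂ)}ᶜ,
        Ψ z = 2 * Complex.cos (2 * ↑π * ↑lam * z) -
          (ε : ℂ) * 2 * ∫ s in (0:ℝ)..lam, Complex.cos (2 * ↑π * z * ↑s) * g s := by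
      rw [Filter.frequently_iff]
      intro U hU
      rw [Metric.mem_nhdsWithin_iff] at hU
      obtain ⟨δ, hδ, hsub⟩ := hU
      set m : ℝ := min δ lam with hm
      have hm0 : 0 < m := lt_min hδ hlam
      have hne : ∃ t : ℝ, t ∈ Set.Ioo 0 m ∧ (t ∈ Set.Ioo (-lam) lam →
          Ψ ↑t = 2 * Complex.cos (2 * ↑π * ↑lam * ↑t) -
            (ε : ℂ) * 2 * ∫ s in (0:ℝ)..lam, Complex.cos (2 * ↑π * (t:ℂ) * ↑s) * g s) := by
        by_contra hcon
        push_neg at hcon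
        rw [MeasureTheory.ae_iff] at hΦae
        have hsub2 : Set.Ioo (0:ℝ) m ⊆ {t : ℝ | ¬(t ∈ Set.Ioo (-lam) lam →
            Ψ ↑t = 2 * Complex.cos (2 * ↑π * ↑lam * ↑t) -
              (ε : ℂ) * 2 * ∫ s in (0:ℝ)..lam, Complex.cos (2 * ↑π * (t:ℂ) * ↑s) * g s)} := by
          intro t ht
          simp only [Set.mem_setOf_eq, Classical.not_imp]
          exact ⟨(hcon t ht).1, (hcon t ht).2⟩
        have hle := measure_mono (μ := (volume : Measure ℝ)) hsub2
        rw [hΦae] at hle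
        rw [Real.volume_Ioo] at hle
        simp only [nonpos_iff_eq_zero, ENNReal.ofReal_eq_zero, sub_zero] at hle
        linarith
      obtain ⟨t, ht, himp⟩ := hne
      have htm : t ∈ Set.Ioo (-lam) lam :=
        ⟨by linarith [ht.1], lt_of_lt_of_le ht.2 (min_le_right _ _)⟩
      refine ⟨(t:ℂ), hsub ⟨?_, ?_⟩, himp htm⟩
      · rw [Metric.mem_ball, dist_zero_right, Complex.norm_real, Real.norm_eq_abs,
          abs_of_pos ht.1]
        exact lt_of_lt_of_le ht.2 (min_le_left _ _)
      · simp only [Set.mem_compl_iff, Set.mem_singleton_iff]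
        exact_mod_cast ne_of_gt ht.1
    -- identity theorem
    have hΦd : Differentiable ℂ (fun z : ℂ => 2 * Complex.cos (2 * ↑π * ↑lam * z) -
        (ε : ℂ) * 2 * ∫ s in (0:ℝ)..lam, Complex.cos (2 * ↑π * z * ↑s) * g s) := by
      have hd1 : Differentiable ℂ fun z : ℂ => Complex.cos (2 * ↑π * ↑lam * z) :=
        Complex.differentiable_cos.comp (differentiable_id.const_mul _)
      have hd2 := entire_aux lam hlam.le (⇑g) (hInt 0 lam)
      exact (hd1.const_mul 2).sub (hd2.const_mul ((ε : ℂ) * 2))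
    have hΨa : AnalyticOnNhd ℂ Ψ Set.univ :=
      hΨd.differentiableOn.analyticOnNhd isOpen_univ
    have hΦa : AnalyticOnNhd ℂ (fun z : ℂ => 2 * Complex.cos (2 * ↑π * ↑lam * z) -
        (ε : ℂ) * 2 * ∫ s in (0:ℝ)..lam, Complex.cos (2 * ↑π * z * ↑s) * g s) Set.univ :=
      hΦd.differentiableOn.analyticOnNhd isOpen_univ
    exact hΨa.eq_of_frequently_eq hΦa hfreq
end
end
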